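/- arXiv:2206.11711 — 7 statements merged into one kernel-verified Lean document; each statement's English description precedes it below -/
import Mathlib

section
/- Let 0 ≤ r < 1 < R and let U = {z ∈ ℂ : r < |z| < R} be the open annulus. If f : U → ℂ is continuous on U and complex differentiable (holomorphic) at every point of U \ 𝕊, then f is holomorphic on all of U. -/
open Metric Real Complex Set Filter Topology intervalIntegral MeasureTheory

lemma auxDiff {ρ : ℝ} (hρ : 0 < ρ) (f : ℂ → ℂ) (hf : ContinuousOn f (sphere (0:ℂ) ρ))
    {z₀ : ℂ} (hz₀ : ‖z₀‖ ≠ ρ) :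
    DifferentiableAt ℂ (fun z => ∮ ζ in C(0, ρ), (ζ - z)⁻¹ • f ζ) z₀ := by
  obtain ⟨C, hC⟩ := (isCompact_sphere (0:ℂ) ρ).exists_bound_of_continuousOn hf
  set ε : ℝ := |ρ - ‖z₀‖| with hεdef
  have hε0 : 0 < ε := abs_pos.2 (sub_ne_zero.2 fun h => hz₀ h.symm)
  have hcm : ∀ θ : ℝ, ‖circleMap 0 ρ θ‖ = ρ := by
    intro θ; simp [norm_circleMap_zero, abs_of_pos hρ]
  have hlow : ∀ (θ : ℝ), ∀ z ∈ ball z₀ (ε/2), ε/2 ≤ ‖circleMap 0 ρ θ - z‖ := by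
    intro θ z hz
    have h2 : ε ≤ ‖circleMap 0 ρ θ - z₀‖ := by
      calc ε = |‖circleMap 0 ρ θ‖ - ‖z₀‖| := by rw [hcm θ]
        _ ≤ ‖circleMap 0 ρ θ - z₀‖ := abs_norm_sub_norm_le _ _
    have h3 : ‖z - z₀‖ < ε/2 := mem_ball_iff_norm.mp hz
    have h4 : ‖circleMap 0 ρ θ - z₀‖ - ‖z - z₀‖ ≤ ‖circleMap 0 ρ θ - z‖ := by
      have := norm_sub_norm_le (circleMap 0 ρ θ - z₀) (z - z₀)
      rwa [sub_sub_sub_cancel_right] at this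
    linarith
  have hne : ∀ (θ : ℝ), ∀ z ∈ ball z₀ (ε/2), circleMap 0 ρ θ - z ≠ 0 := by
    intro θ z hz h
    have := hlow θ z hz
    rw [h, norm_zero] at this; linarith
  have hcf : Continuous fun θ => f (circleMap 0 ρ θ) :=
    hf.comp_continuous (continuous_circleMap 0 ρ) fun θ => circleMap_mem_sphere 0 hρ.le θ
  have hcd : Continuous fun θ => deriv (circleMap 0 ρ) θ := by
    simp only [deriv_circleMap]; exact (continuous_circleMap 0 ρ).mul continuous_const
  have key := intervalIntegral.hasDerivAt_integral_of_dominated_loc_of_deriv_le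
    (F := fun z θ => deriv (circleMap 0 ρ) θ • ((circleMap 0 ρ θ - z)⁻¹ • f (circleMap 0 ρ θ)))
    (F' := fun z θ => deriv (circleMap 0 ρ) θ • (((circleMap 0 ρ θ - z)^2)⁻¹ • f (circleMap 0 ρ θ)))
    (x₀ := z₀) (a := 0) (b := 2*π) (μ := volume)
    (bound := fun _ => |ρ| * (((ε/2)^2)⁻¹ * C))
    (ball_mem_nhds z₀ (half_pos hε0)) ?_ ?_ ?_ ?_ ?_ ?_
  · simp only [circleIntegral]
    exact key.2.differentiableAt
  · filter_upwards [ball_mem_nhds z₀ (half_pos hε0)] with z hz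
    exact (hcd.smul (((((continuous_circleMap 0 ρ).sub continuous_const).inv₀
      (fun θ => hne θ z hz)).smul hcf))).aestronglyMeasurable
  · exact (hcd.smul (((((continuous_circleMap 0 ρ).sub continuous_const).inv₀
      (fun θ => hne θ z₀ (mem_ball_self (half_pos hε0)))).smul hcf))).intervalIntegrable 0 (2*π)
  · exact (hcd.smul ((((((continuous_circleMap 0 ρ).sub continuous_const).pow 2).inv₀
      (fun θ => pow_ne_zero 2 (hne θ z₀ (mem_ball_self (half_pos hε0))))).smul hcf))).aestronglyMeasurable
  · refine MeasureTheory.ae_of_all _ fun θ _ z hz => ?_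
    have h1 : ‖deriv (circleMap 0 ρ) θ‖ = |ρ| := by
      simp [deriv_circleMap, norm_circleMap_zero]
    rw [norm_smul, norm_smul, h1]
    have hC0 : 0 ≤ C := le_trans (norm_nonneg _) (hC _ (circleMap_mem_sphere 0 hρ.le 0))
    have h2 : ‖((circleMap 0 ρ θ - z)^2)⁻¹‖ ≤ ((ε/2)^2)⁻¹ := by
      rw [norm_inv, norm_pow]
      exact inv_anti₀ (by positivity) (by gcongr; exact hlow θ z hz)
    exact mul_le_mul_of_nonneg_left
      (mul_le_mul h2 (hC _ (circleMap_mem_sphere 0 hρ.le θ)) (norm_nonneg _) (by positivity))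
      (abs_nonneg ρ)
  · exact intervalIntegrable_const
  · refine MeasureTheory.ae_of_all _ fun θ _ z hz => ?_
    have h := ((hasDerivAt_id z).const_sub (circleMap 0 ρ θ)).inv (hne θ z hz)
    have h2 := (h.mul_const (f (circleMap 0 ρ θ))).const_mul (deriv (circleMap 0 ρ) θ)
    simp only [smul_eq_mul]
    exact h2.congr_deriv (by simp)

lemma auxKey {a b : ℝ} (f : ℂ → ℂ) (ha : 0 < a) {w : ℂ} (hwa : a < ‖w‖) (hwb : ‖w‖ < b)
    (hc : ContinuousOn f (closedBall (0:ℂ) b \ ball (0:ℂ) a))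
    (hd : ∀ z ∈ ball (0:ℂ) b \ closedBall (0:ℂ) a, DifferentiableAt ℂ f z) :
    (∮ ζ in C(0, b), (ζ - w)⁻¹ • f ζ) - (∮ ζ in C(0, a), (ζ - w)⁻¹ • f ζ)
      = (2 * π * I) • f w := by
  have hab : a ≤ b := (hwa.trans hwb).le
  have hb0 : 0 < b := ha.trans_le hab
  set O : Set ℂ := ball (0:ℂ) b \ closedBall (0:ℂ) a with hO
  have hOopen : IsOpen O := isOpen_ball.sdiff Metric.isClosed_closedBall
  have hwO : w ∈ O := ⟨mem_ball_zero_iff.2 hwb, fun h => absurd (mem_closedBall_zero_iff.1 h)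
    (not_le.2 hwa)⟩
  have hfd : DifferentiableOn ℂ f O := fun z hz => (hd z hz).differentiableWithinAt
  have hds : DifferentiableOn ℂ (dslope f w) O :=
    (differentiableOn_dslope (hOopen.mem_nhds hwO)).mpr hfd
  -- continuity of dslope on the closed annulus
  have hcds : ContinuousOn (dslope f w) (closedBall (0:ℂ) b \ ball (0:ℂ) a) := by
    intro ζ hζ
    by_cases hζO : ζ ∈ O
    · exact ((hds.differentiableAt (hOopen.mem_nhds hζO)).continuousAt).continuousWithinAt
    · have hne : ζ ≠ w := fun h => hζO (h ▸ hwO)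
      have base : ContinuousWithinAt (fun x => (x - w)⁻¹ • (f x - f w))
          (closedBall (0:ℂ) b \ ball (0:ℂ) a) ζ :=
        (((continuousWithinAt_id.sub continuousWithinAt_const).inv₀
          (sub_ne_zero.2 hne)).smul ((hc ζ hζ).sub continuousWithinAt_const))
      refine base.congr_of_eventuallyEq ?_ ?_
      · have hmem : {w}ᶜ ∈ nhdsWithin ζ (closedBall (0:ℂ) b \ ball (0:ℂ) a) :=
          mem_nhdsWithin_of_mem_nhds (isOpen_compl_singleton.mem_nhds hne)
        filter_upwards [hmem] with x hx
        rw [dslope_of_ne f hx, slope_def_field]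
        simp [div_eq_inv_mul, smul_eq_mul]
      · rw [dslope_of_ne f hne, slope_def_field]
        simp [div_eq_inv_mul, smul_eq_mul]
  have heq := circleIntegral_eq_of_differentiable_on_annulus_off_countable ha hab
    countable_empty hcds (fun z hz => hds.differentiableAt (hOopen.mem_nhds hz.1))
  -- rewrite both dslope integrals
  have hrw : ∀ ρ : ℝ, 0 < ρ → ‖w‖ ≠ ρ → (sphere (0:ℂ) ρ ⊆ closedBall (0:ℂ) b \ ball (0:ℂ) a) →
      (∮ ζ in C(0, ρ), dslope f w ζ)
        = (∮ ζ in C(0, ρ), (ζ - w)⁻¹ • f ζ) - (∮ ζ in C(0, ρ), (ζ - w)⁻¹) • f w := by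
    intro ρ hρ hwρ hsub
    have hnz : ∀ ζ ∈ sphere (0:ℂ) ρ, ζ ≠ w := by
      intro ζ hζ h
      exact hwρ (by rw [← h]; simpa using hζ)
    have hint1 : CircleIntegrable (fun ζ => (ζ - w)⁻¹ • f ζ) 0 ρ := by
      refine ContinuousOn.circleIntegrable hρ.le ?_
      exact ((continuousOn_id.sub continuousOn_const).inv₀
        (fun ζ hζ => sub_ne_zero.2 (hnz ζ hζ))).smul (hc.mono hsub)
    have hint2 : CircleIntegrable (fun ζ => (ζ - w)⁻¹ • f w) 0 ρ := by
      refine ContinuousOn.circleIntegrable hρ.le ?_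
      exact ((continuousOn_id.sub continuousOn_const).inv₀
        (fun ζ hζ => sub_ne_zero.2 (hnz ζ hζ))).smul continuousOn_const
    calc (∮ ζ in C(0, ρ), dslope f w ζ)
        = ∮ ζ in C(0, ρ), ((ζ - w)⁻¹ • f ζ - (ζ - w)⁻¹ • f w) := by
          refine circleIntegral.integral_congr hρ.le fun ζ hζ => ?_
          rw [dslope_of_ne f (hnz ζ hζ), slope_def_field]
          simp [div_eq_inv_mul, smul_eq_mul, mul_sub]
      _ = (∮ ζ in C(0, ρ), (ζ - w)⁻¹ • f ζ) - (∮ ζ in C(0, ρ), (ζ - w)⁻¹ • f w) :=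
          circleIntegral.integral_sub hint1 hint2
      _ = (∮ ζ in C(0, ρ), (ζ - w)⁻¹ • f ζ) - (∮ ζ in C(0, ρ), (ζ - w)⁻¹) • f w := by
          rw [circleIntegral.integral_smul_const]
  have hsub_b : sphere (0:ℂ) b ⊆ closedBall (0:ℂ) b \ ball (0:ℂ) a := by
    intro ζ hζ
    have : ‖ζ‖ = b := by simpa using hζ
    exact ⟨mem_closedBall_zero_iff.2 this.le, fun h => by
      have := mem_ball_zero_iff.1 h; linarith⟩
  have hsub_a : sphere (0:ℂ) a ⊆ closedBall (0:ℂ) b \ ball (0:ℂ) a := by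
    intro ζ hζ
    have : ‖ζ‖ = a := by simpa using hζ
    exact ⟨mem_closedBall_zero_iff.2 (this.le.trans hab), fun h => by
      have := mem_ball_zero_iff.1 h; linarith⟩
  rw [hrw b hb0 hwb.ne hsub_b, hrw a ha hwa.ne' hsub_a] at heq
  have hvb : (∮ ζ in C(0, b), (ζ - w)⁻¹) = 2 * π * I :=
    circleIntegral.integral_sub_inv_of_mem_ball (by simpa [Complex.dist_eq] using hwb)
  have hva : (∮ ζ in C(0, a), (ζ - w)⁻¹) = 0 := by
    refine circleIntegral_eq_zero_of_differentiable_on_off_countable ha.le countable_empty ?_ ?_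
    · refine (continuousOn_id.sub continuousOn_const).inv₀ fun ζ hζ => sub_ne_zero.2 fun h => ?_
      simp only [id_eq] at h
      have := mem_closedBall_zero_iff.1 hζ
      rw [h] at this; linarith
    · intro z hz
      refine ((differentiableAt_id.sub_const w).inv (sub_ne_zero.2 fun h => ?_))
      simp only [id_eq] at h
      have := mem_ball_zero_iff.1 hz.1
      rw [h] at this; linarith
  rw [hvb, hva, zero_smul, sub_zero] at heq
  linear_combination heq

/-- If `f` is continuous on the open annulus `{z | r < ‖z‖ < R}` (with
`0 ≤ r < 1 < R`) and complex differentiable at every point of the annulus off the unit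
circle, then `f` is complex differentiable at every point of the annulus. -/
theorem stmt_0 (r R : ℝ) (hr0 : 0 ≤ r) (hr1 : r < 1) (hR : 1 < R) (f : ℂ → ℂ)
    (hcont : ContinuousOn f {z : ℂ | r < ‖z‖ ∧ ‖z‖ < R})
    (hdiff : ∀ z : ℂ, r < ‖z‖ → ‖z‖ < R → ‖z‖ ≠ 1 → DifferentiableAt ℂ f z) :
    ∀ z : ℂ, r < ‖z‖ → ‖z‖ < R → DifferentiableAt ℂ f z := by
  intro z hz1 hz2
  by_cases hzc : ‖z‖ ≠ 1
  · exact hdiff z hz1 hz2 hzc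
  push_neg at hzc
  set t : ℝ := (r + 1) / 2 with htdef
  set T : ℝ := (1 + R) / 2 with hTdef
  have ht0 : 0 < t := by rw [htdef]; linarith
  have htr : r < t := by rw [htdef]; linarith
  have ht1 : t < 1 := by rw [htdef]; linarith
  have hT1 : 1 < T := by rw [hTdef]; linarith
  have hTR : T < R := by rw [hTdef]; linarith
  have hT0 : 0 < T := by linarith
  have h2pi : (2 * (π : ℂ) * Complex.I) ≠ 0 := Complex.two_pi_I_ne_zero
  have hsphere : ∀ ρ : ℝ, r < ρ → ρ < R → ContinuousOn f (sphere (0:ℂ) ρ) := by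
    intro ρ h1 h2
    refine hcont.mono fun ζ hζ => ?_
    have : ‖ζ‖ = ρ := by simpa using hζ
    exact ⟨this ▸ h1, this ▸ h2⟩
  set g : ℂ → ℂ := fun w => (2 * (π : ℂ) * Complex.I)⁻¹ •
    ((∮ ζ in C(0, T), (ζ - w)⁻¹ • f ζ) - ∮ ζ in C(0, t), (ζ - w)⁻¹ • f ζ) with hgdef
  have hgdiff : ∀ w : ℂ, ‖w‖ ≠ t → ‖w‖ ≠ T → DifferentiableAt ℂ g w := by
    intro w h1 h2
    exact ((auxDiff hT0 f (hsphere T (by linarith) hTR) h2).sub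
      (auxDiff ht0 f (hsphere t htr (by linarith)) h1)).const_smul (2 * (π : ℂ) * Complex.I)⁻¹
  -- f = g off the circle in the annulus (t, T)
  have hfg : ∀ w : ℂ, t < ‖w‖ → ‖w‖ < T → ‖w‖ ≠ 1 → f w = g w := by
    intro w hw1 hw2 hw3
    rcases hw3.lt_or_gt with hlt | hgt
    · -- ‖w‖ < 1
      have hkey : (∮ ζ in C(0, 1), (ζ - w)⁻¹ • f ζ) - (∮ ζ in C(0, t), (ζ - w)⁻¹ • f ζ)
          = (2 * (π : ℂ) * Complex.I) • f w := by
        refine auxKey f ht0 hw1 hlt ?_ ?_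
        · refine hcont.mono fun ζ hζ => ?_
          have h1 := mem_closedBall_zero_iff.1 hζ.1
          have h2 : ¬ ‖ζ‖ < t := fun h => hζ.2 (mem_ball_zero_iff.2 h)
          exact ⟨by push_neg at h2; linarith, by linarith⟩
        · intro ζ hζ
          have h1 := mem_ball_zero_iff.1 hζ.1
          have h2 : ¬ ‖ζ‖ ≤ t := fun h => hζ.2 (mem_closedBall_zero_iff.2 h)
          push_neg at h2
          exact hdiff ζ (by linarith) (by linarith) (ne_of_lt h1)
      have htrans : (∮ ζ in C(0, T), (ζ - w)⁻¹ • f ζ) = ∮ ζ in C(0, 1), (ζ - w)⁻¹ • f ζ := by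
        refine circleIntegral_eq_of_differentiable_on_annulus_off_countable one_pos hT1.le
          countable_empty ?_ ?_
        · refine ContinuousOn.fun_smul ?_ ?_
          · refine (continuousOn_id.sub continuousOn_const).inv₀ fun ζ hζ => ?_
            have h2 : ¬ ‖ζ‖ < 1 := fun h => hζ.2 (mem_ball_zero_iff.2 h)
            push_neg at h2
            exact sub_ne_zero.2 fun h => by simp only [id_eq] at h; rw [h] at h2; linarith
          · refine hcont.mono fun ζ hζ => ?_
            have h1 := mem_closedBall_zero_iff.1 hζ.1
            have h2 : ¬ ‖ζ‖ < 1 := fun h => hζ.2 (mem_ball_zero_iff.2 h)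
            push_neg at h2
            exact ⟨by linarith, by linarith⟩
        · intro ζ hζ
          have h1 := mem_ball_zero_iff.1 hζ.1.1
          have h2 : ¬ ‖ζ‖ ≤ 1 := fun h => hζ.1.2 (mem_closedBall_zero_iff.2 h)
          push_neg at h2
          refine DifferentiableAt.fun_smul ?_ (hdiff ζ (by linarith) (by linarith) (by linarith))
          exact (differentiableAt_id.sub_const w).inv
            (sub_ne_zero.2 fun h => by simp only [id_eq] at h; rw [h] at h2; linarith)
      rw [hgdef]
      simp only
      rw [htrans, hkey, smul_smul, inv_mul_cancel₀ h2pi, one_smul]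
    · -- 1 < ‖w‖
      have hkey : (∮ ζ in C(0, T), (ζ - w)⁻¹ • f ζ) - (∮ ζ in C(0, 1), (ζ - w)⁻¹ • f ζ)
          = (2 * (π : ℂ) * Complex.I) • f w := by
        refine auxKey f one_pos hgt hw2 ?_ ?_
        · refine hcont.mono fun ζ hζ => ?_
          have h1 := mem_closedBall_zero_iff.1 hζ.1
          have h2 : ¬ ‖ζ‖ < 1 := fun h => hζ.2 (mem_ball_zero_iff.2 h)
          push_neg at h2
          exact ⟨by linarith, by linarith⟩
        · intro ζ hζ
          have h1 := mem_ball_zero_iff.1 hζ.1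
          have h2 : ¬ ‖ζ‖ ≤ 1 := fun h => hζ.2 (mem_closedBall_zero_iff.2 h)
          push_neg at h2
          exact hdiff ζ (by linarith) (by linarith) (by linarith)
      have htrans : (∮ ζ in C(0, 1), (ζ - w)⁻¹ • f ζ) = ∮ ζ in C(0, t), (ζ - w)⁻¹ • f ζ := by
        refine circleIntegral_eq_of_differentiable_on_annulus_off_countable ht0 ht1.le
          countable_empty ?_ ?_
        · refine ContinuousOn.fun_smul ?_ ?_
          · refine (continuousOn_id.sub continuousOn_const).inv₀ fun ζ hζ => ?_
            have h1 := mem_closedBall_zero_iff.1 hζ.1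
            exact sub_ne_zero.2 fun h => by simp only [id_eq] at h; rw [h] at h1; linarith
          · refine hcont.mono fun ζ hζ => ?_
            have h1 := mem_closedBall_zero_iff.1 hζ.1
            have h2 : ¬ ‖ζ‖ < t := fun h => hζ.2 (mem_ball_zero_iff.2 h)
            push_neg at h2
            exact ⟨by linarith, by linarith⟩
        · intro ζ hζ
          have h1 := mem_ball_zero_iff.1 hζ.1.1
          have h2 : ¬ ‖ζ‖ ≤ t := fun h => hζ.1.2 (mem_closedBall_zero_iff.2 h)
          push_neg at h2
          refine DifferentiableAt.fun_smul ?_ (hdiff ζ (by linarith) (by linarith) (by linarith))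
          exact (differentiableAt_id.sub_const w).inv
            (sub_ne_zero.2 fun h => by simp only [id_eq] at h; rw [h] at h1; linarith)
      rw [hgdef]
      simp only
      rw [← htrans, hkey, smul_smul, inv_mul_cancel₀ h2pi, one_smul]
  -- extend equality to the circle by continuity
  have hAopen : IsOpen {z : ℂ | r < ‖z‖ ∧ ‖z‖ < R} :=
    (isOpen_lt (continuous_const : Continuous fun _ : ℂ => r) continuous_norm).inter
      (isOpen_lt continuous_norm (continuous_const : Continuous fun _ : ℂ => R))
  have hfgV : ∀ w : ℂ, t < ‖w‖ → ‖w‖ < T → f w = g w := by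
    intro w hw1 hw2
    by_cases hw3 : ‖w‖ = 1
    · have hfc : ContinuousAt f w :=
        hcont.continuousAt (hAopen.mem_nhds ⟨by rw [hw3]; linarith, by rw [hw3]; linarith⟩)
      have hgc : ContinuousAt g w :=
        (hgdiff w (by rw [hw3]; exact ht1.ne') (by rw [hw3]; exact hT1.ne)).continuousAt
      have hu : Tendsto (fun s : ℝ => (s : ℂ) * w) (nhdsWithin (1:ℝ) (Set.Iio (1:ℝ))) (𝓝 w) := by
        have hco : Continuous fun s : ℝ => (s : ℂ) * w :=
          Complex.continuous_ofReal.mul continuous_const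
        have h0 := hco.tendsto 1
        simp only [Complex.ofReal_one, one_mul] at h0
        exact h0.mono_left nhdsWithin_le_nhds
      have hev : ∀ᶠ (s : ℝ) in nhdsWithin (1:ℝ) (Set.Iio (1:ℝ)), f ((s : ℂ) * w) = g ((s : ℂ) * w) := by
        filter_upwards [Ioo_mem_nhdsLT_of_mem (Set.mem_Ioc.2 ⟨ht1, le_refl 1⟩)] with s hs
        have hs0 : 0 < s := lt_trans ht0 hs.1
        have hn : ‖(s : ℂ) * w‖ = s := by
          rw [norm_mul, hw3, mul_one, Complex.norm_real, Real.norm_eq_abs, abs_of_pos hs0]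
        exact hfg _ (by rw [hn]; exact hs.1) (by rw [hn]; linarith [hs.2]) (by rw [hn]; exact hs.2.ne)
      have l1 : Tendsto (fun s : ℝ => f ((s : ℂ) * w)) (nhdsWithin (1:ℝ) (Set.Iio (1:ℝ))) (𝓝 (f w)) :=
        hfc.tendsto.comp hu
      have l2 : Tendsto (fun s : ℝ => g ((s : ℂ) * w)) (nhdsWithin (1:ℝ) (Set.Iio (1:ℝ))) (𝓝 (g w)) :=
        hgc.tendsto.comp hu
      exact tendsto_nhds_unique l1 (l2.congr' (hev.mono fun s h => h.symm))
    · exact hfg w hw1 hw2 hw3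
  have hVopen : IsOpen {w : ℂ | t < ‖w‖ ∧ ‖w‖ < T} :=
    (isOpen_lt (continuous_const : Continuous fun _ : ℂ => t) continuous_norm).inter
      (isOpen_lt continuous_norm (continuous_const : Continuous fun _ : ℂ => T))
  have hzV : z ∈ {w : ℂ | t < ‖w‖ ∧ ‖w‖ < T} := ⟨by rw [hzc]; exact ht1, by rw [hzc]; exact hT1⟩
  have heq : f =ᶠ[𝓝 z] g :=
    Filter.eventuallyEq_of_mem (hVopen.mem_nhds hzV) fun w hw => hfgV w hw.1 hw.2
  exact heq.differentiableAt_iff.mpr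
    (hgdiff z (by rw [hzc]; exact ht1.ne') (by rw [hzc]; exact hT1.ne))
end

section
/- Let G be a complex Banach–Lie group such that holomorphic functions separate the points of G. Let f₊, g₊ : 𝔻̄ → G be continuous maps that are holomorphic on 𝔻, and let f₋, g₋ : {z ∈ ℂ : |z| ≥ 1} → G be continuous maps that are holomorphic on {z : |z| > 1} and possess limits f₋(∞) and g₋(∞) as |z| → ∞. If f₊(z)f₋(z) = g₊(z)g₋(z) for all z ∈ 𝕊 and f₋(∞) = g₋(∞), then f₊ = g₊ on 𝔻̄ and f₋ = g₋ on {z : |z| ≥ 1}. -/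
open Manifold Metric Filter Complex Set


lemma limit_integral {v : ℂ → ℂ} {c w K : ℂ}
    (hvc : ContinuousOn v {z : ℂ | 1 ≤ ‖z‖})
    (hvl : Tendsto v (comap (fun z : ℂ => ‖z‖) atTop) (nhds c))
    (hK : ∀ R : ℝ, 2 * ‖w‖ + 2 ≤ R → (∮ z in C(0, R), (z - w)⁻¹ • v z) = K) :
    K = (2 * Real.pi * I : ℂ) • c := by
  have key : ∀ ε : ℝ, 0 < ε → ‖K - (2 * Real.pi * I : ℂ) • c‖ ≤ 4 * Real.pi * ε := by
    intro ε hε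
    have h1 : ∀ᶠ x in comap (fun z : ℂ => ‖z‖) atTop, dist (v x) c < ε :=
      Metric.tendsto_nhds.mp hvl ε hε
    rw [eventually_comap] at h1
    obtain ⟨M, hM⟩ := (eventually_atTop).mp h1
    set R : ℝ := max (2 * ‖w‖ + 2) M with hR
    have hR2 : 2 * ‖w‖ + 2 ≤ R := le_max_left _ _
    have hRM : M ≤ R := le_max_right _ _
    have hwpos : (0:ℝ) ≤ ‖w‖ := norm_nonneg w
    have hR0 : (0:ℝ) < R := lt_of_lt_of_le (by linarith) hR2
    have hwR : ‖w‖ < R := by nlinarith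
    have hpos : (0:ℝ) < R - ‖w‖ := by linarith
    have hRw2 : R ≤ 2 * (R - ‖w‖) := by nlinarith
    have hKR := hK R hR2
    have hzw : ∀ z ∈ sphere (0:ℂ) R, z - w ≠ 0 := by
      intro z hz h
      rw [mem_sphere_zero_iff_norm] at hz
      rw [sub_eq_zero] at h
      rw [h] at hz
      exact (ne_of_lt hwR) hz
    have hcontsub : ContinuousOn (fun z : ℂ => (z - w)⁻¹) (sphere (0:ℂ) R) :=
      (continuousOn_id.sub continuousOn_const).inv₀ hzw
    have hvsp : ContinuousOn v (sphere (0:ℂ) R) := by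
      apply hvc.mono
      intro z hz
      rw [mem_sphere_zero_iff_norm] at hz
      simp only [mem_setOf_eq, hz]
      nlinarith
    have hint1 : CircleIntegrable (fun z : ℂ => (z - w)⁻¹ • v z) 0 R :=
      (hcontsub.smul hvsp).circleIntegrable hR0.le
    have hint2 : CircleIntegrable (fun z : ℂ => (z - w)⁻¹ • c) 0 R :=
      (hcontsub.smul continuousOn_const).circleIntegrable hR0.le
    have hwball : w ∈ ball (0:ℂ) R := by
      simpa [mem_ball, dist_eq_norm] using hwR
    have hIc : (∮ z in C(0, R), (z - w)⁻¹ • c) = (2 * Real.pi * I : ℂ) • c := by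
      rw [circleIntegral.integral_smul_const, circleIntegral.integral_sub_inv_of_mem_ball hwball]
    have hsub : K - (2 * Real.pi * I : ℂ) • c
        = ∮ z in C(0, R), ((z - w)⁻¹ • v z - (z - w)⁻¹ • c) := by
      rw [circleIntegral.integral_sub hint1 hint2, hKR, hIc]
    rw [hsub]
    have hbound : ∀ z ∈ sphere (0:ℂ) R,
        ‖(z - w)⁻¹ • v z - (z - w)⁻¹ • c‖ ≤ (R - ‖w‖)⁻¹ * ε := by
      intro z hz
      have hz' := mem_sphere_zero_iff_norm.mp hz
      have hzw' : R - ‖w‖ ≤ ‖z - w‖ := by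
        have := norm_sub_norm_le z w
        rw [hz'] at this; linarith [this]
      have hvz : ‖v z - c‖ ≤ ε := by
        have := hM ‖z‖ (by rw [hz']; exact hRM) z rfl
        rw [dist_eq_norm] at this; linarith
      rw [← smul_sub, norm_smul, norm_inv]
      have h1 : ‖z - w‖⁻¹ ≤ (R - ‖w‖)⁻¹ := inv_anti₀ hpos hzw'
      exact mul_le_mul h1 hvz (norm_nonneg _) (le_of_lt (inv_pos.mpr hpos))
    have hb2 := circleIntegral.norm_integral_le_of_norm_le_const hR0.le hbound
    refine le_trans hb2 ?_
    have htinv : (0:ℝ) < (R - ‖w‖)⁻¹ := inv_pos.mpr hpos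
    have hRt : R * (R - ‖w‖)⁻¹ ≤ 2 := by
      have h1 : R * (R - ‖w‖)⁻¹ ≤ (2 * (R - ‖w‖)) * (R - ‖w‖)⁻¹ :=
        mul_le_mul_of_nonneg_right hRw2 htinv.le
      have h2 : (2 * (R - ‖w‖)) * (R - ‖w‖)⁻¹ = 2 := by
        rw [mul_assoc, mul_inv_cancel₀ hpos.ne', mul_one]
      linarith
    nlinarith [Real.pi_pos, mul_nonneg (mul_nonneg (by positivity : (0:ℝ) ≤ 2 * Real.pi) hε.le)
      (by linarith : (0:ℝ) ≤ 2 - R * (R - ‖w‖)⁻¹)]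
  by_contra h
  have hne : 0 < ‖K - (2 * Real.pi * I : ℂ) • c‖ := by
    rw [norm_pos_iff, sub_ne_zero]; exact h
  have hk := key (‖K - (2 * Real.pi * I : ℂ) • c‖ / (8 * Real.pi)) (by positivity)
  have h4 : 4 * Real.pi * (‖K - (2 * Real.pi * I : ℂ) • c‖ / (8 * Real.pi))
      = ‖K - (2 * Real.pi * I : ℂ) • c‖ / 2 := by
    field_simp
    ring
  rw [h4] at hk
  linarith


lemma two_pi_I_ne_zero' : (2 * Real.pi * I : ℂ) ≠ 0 := by
  simp [Real.pi_ne_zero, I_ne_zero]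

lemma isOpen_ext : IsOpen {z : ℂ | 1 < ‖z‖} :=
  isOpen_lt continuous_const continuous_norm

/-- interior part: u = c on the open unit ball -/
lemma interior_const {u v : ℂ → ℂ} {c : ℂ}
    (huc : ContinuousOn u (closedBall 0 1)) (hud : DifferentiableOn ℂ u (ball 0 1))
    (hvc : ContinuousOn v {z : ℂ | 1 ≤ ‖z‖}) (hvd : DifferentiableOn ℂ v {z : ℂ | 1 < ‖z‖})
    (hvl : Tendsto v (comap (fun z : ℂ => ‖z‖) atTop) (nhds c))
    (heq : ∀ z : ℂ, ‖z‖ = 1 → u z = v z) :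
    ∀ w ∈ ball (0:ℂ) 1, u w = c := by
  intro w hw
  rw [mem_ball, dist_eq_norm, sub_zero] at hw
  have hK : ∀ R : ℝ, 2 * ‖w‖ + 2 ≤ R →
      (∮ z in C(0, R), (z - w)⁻¹ • v z) = (2 * Real.pi * I : ℂ) • u w := by
    intro R hR
    have hR1 : (1:ℝ) ≤ R := le_trans (by linarith [norm_nonneg w]) hR
    -- annulus: integral over C(0,R) equals integral over C(0,1)
    have hzw : ∀ z : ℂ, 1 ≤ ‖z‖ → z - w ≠ 0 := by
      intro z hz h
      rw [sub_eq_zero] at h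
      rw [h] at hz; linarith
    have hann : (∮ z in C(0, R), (z - w)⁻¹ • v z) = ∮ z in C(0, 1), (z - w)⁻¹ • v z := by
      apply Complex.circleIntegral_eq_of_differentiable_on_annulus_off_countable one_pos hR1
        countable_empty
      · intro z hz
        have hz1 : 1 ≤ ‖z‖ := by
          simpa [mem_ball, dist_eq_norm] using hz.2
        exact (ContinuousWithinAt.smul
          (((continuousWithinAt_id.sub continuousWithinAt_const).inv₀ (hzw z hz1)))
          ((hvc z hz1).mono (fun y hy => by
            have : y ∈ closedBall (0:ℂ) R \ ball 0 1 := hy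
            simpa [mem_setOf_eq] using (by simpa [mem_ball, dist_eq_norm] using this.2 : 1 ≤ ‖y‖))))
      · intro z hz
        have hz1 : 1 < ‖z‖ := by
          simpa [mem_closedBall, dist_eq_norm] using hz.1.2
        exact ((differentiableAt_id.sub_const w).inv (hzw z hz1.le)).smul
          (hvd.differentiableAt (isOpen_ext.mem_nhds hz1))
    have hcongr : (∮ z in C(0, 1), (z - w)⁻¹ • v z) = ∮ z in C(0, 1), (z - w)⁻¹ • u z := by
      apply circleIntegral.integral_congr zero_le_one
      intro z hz
      rw [mem_sphere_zero_iff_norm] at hz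
      simp only [heq z hz]
    have hcauchy : (∮ z in C(0, 1), (z - w)⁻¹ • u z) = (2 * Real.pi * I : ℂ) • u w := by
      apply Complex.circleIntegral_sub_inv_smul_of_differentiable_on_off_countable countable_empty
        (by simpa [mem_ball, dist_eq_norm] using hw) huc
      intro x hx
      exact hud.differentiableAt (isOpen_ball.mem_nhds hx.1)
    rw [hann, hcongr, hcauchy]
  have := limit_integral hvc hvl hK
  exact smul_right_injective ℂ two_pi_I_ne_zero' this


lemma exterior_const {u v : ℂ → ℂ} {c : ℂ}
    (huc : ContinuousOn u (closedBall 0 1)) (hud : DifferentiableOn ℂ u (ball 0 1))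
    (hvc : ContinuousOn v {z : ℂ | 1 ≤ ‖z‖}) (hvd : DifferentiableOn ℂ v {z : ℂ | 1 < ‖z‖})
    (hvl : Tendsto v (comap (fun z : ℂ => ‖z‖) atTop) (nhds c))
    (heq : ∀ z : ℂ, ‖z‖ = 1 → u z = v z) :
    ∀ w : ℂ, 1 < ‖w‖ → v w = c := by
  intro w hw
  -- the function (z-w)⁻¹ is nice on the closed unit ball
  have hz1w : ∀ z : ℂ, ‖z‖ ≤ 1 → z - w ≠ 0 := by
    intro z hz h
    rw [sub_eq_zero] at h
    rw [h] at hz; linarith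
  have hc1 : ContinuousOn (fun z : ℂ => (z - w)⁻¹) (closedBall 0 1) := by
    apply (continuousOn_id.sub continuousOn_const).inv₀
    intro z hz
    exact hz1w z (by simpa [mem_closedBall, dist_eq_norm] using hz)
  -- ∮_{C(0,1)} (z-w)⁻¹ • v z = 0
  have hI1v : (∮ z in C(0, 1), (z - w)⁻¹ • v z) = 0 := by
    have hcongr : (∮ z in C(0, 1), (z - w)⁻¹ • v z) = ∮ z in C(0, 1), (z - w)⁻¹ • u z := by
      apply circleIntegral.integral_congr zero_le_one
      intro z hz
      rw [mem_sphere_zero_iff_norm] at hz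
      simp only [heq z hz]
    rw [hcongr]
    apply Complex.circleIntegral_eq_zero_of_differentiable_on_off_countable zero_le_one
      countable_empty (hc1.smul huc)
    intro z hz
    have hz1 : ‖z‖ < 1 := by simpa [mem_ball, dist_eq_norm] using hz.1
    exact ((differentiableAt_id.sub_const w).inv (hz1w z hz1.le)).smul
      (hud.differentiableAt (isOpen_ball.mem_nhds (by simpa [mem_ball, dist_eq_norm] using hz1)))
  -- ∮_{C(0,1)} (z-w)⁻¹ = 0
  have hI1 : (∮ z in C(0, 1), (z - w)⁻¹) = 0 := by
    apply Complex.circleIntegral_eq_zero_of_differentiable_on_off_countable zero_le_one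
      countable_empty (by simpa using hc1)
    intro z hz
    have hz1 : ‖z‖ < 1 := by simpa [mem_ball, dist_eq_norm] using hz.1
    exact (differentiableAt_id.sub_const w).inv (hz1w z hz1.le)
  have hK : ∀ R : ℝ, 2 * ‖w‖ + 2 ≤ R →
      (∮ z in C(0, R), (z - w)⁻¹ • v z) = (2 * Real.pi * I : ℂ) • v w := by
    intro R hR
    have hwpos : (0:ℝ) ≤ ‖w‖ := norm_nonneg w
    have hR1 : (1:ℝ) ≤ R := by linarith
    have hwR : ‖w‖ < R := by linarith
    have hdvw : DifferentiableAt ℂ v w := hvd.differentiableAt (isOpen_ext.mem_nhds hw)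
    have hA : closedBall (0:ℂ) R \ ball 0 1 ∈ nhds w := by
      rw [diff_eq]
      apply Filter.inter_mem
      · exact mem_of_superset (isOpen_ball.mem_nhds
          (by simpa [mem_ball, dist_eq_norm] using hwR)) ball_subset_closedBall
      · apply mem_of_superset (isOpen_ext.mem_nhds hw)
        intro z hz
        simp only [mem_compl_iff, mem_ball, dist_eq_norm, sub_zero, not_lt, mem_setOf_eq] at *
        linarith
    have hFc : ContinuousOn (dslope v w) (closedBall 0 R \ ball 0 1) := by
      refine (continuousOn_dslope hA).2 ⟨hvc.mono ?_, hdvw⟩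
      intro z hz
      have : ¬ ‖z‖ < 1 := by simpa [mem_ball, dist_eq_norm] using hz.2
      simpa [mem_setOf_eq] using not_lt.mp this
    have hFd : ∀ z ∈ (ball (0:ℂ) R \ closedBall 0 1) \ {w}, DifferentiableAt ℂ (dslope v w) z := by
      intro z hz
      have hzne : z ≠ w := by simpa using hz.2
      refine (differentiableAt_dslope_of_ne hzne).2 ?_
      have hz1 : 1 < ‖z‖ := by
        have : ¬ ‖z‖ ≤ 1 := by simpa [mem_closedBall, dist_eq_norm] using hz.1.2
        linarith [not_le.mp this]
      exact hvd.differentiableAt (isOpen_ext.mem_nhds hz1)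
    have hann := Complex.circleIntegral_eq_of_differentiable_on_annulus_off_countable one_pos hR1
      (countable_singleton w) hFc hFd
    -- rewrite dslope integrals
    have hkey : ∀ ρ : ℝ, 0 < ρ → (∀ z ∈ sphere (0:ℂ) ρ, z ≠ w) → ContinuousOn v (sphere 0 ρ) →
        (∮ z in C(0, ρ), dslope v w z)
          = (∮ z in C(0, ρ), (z - w)⁻¹ • v z) - (∮ z in C(0, ρ), (z - w)⁻¹) • v w := by
      intro ρ hρ hne hvρ
      have hcρ : ContinuousOn (fun z : ℂ => (z - w)⁻¹) (sphere (0:ℂ) ρ) :=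
        (continuousOn_id.sub continuousOn_const).inv₀
          (fun z hz => sub_ne_zero.mpr (hne z hz))
      have hEq : EqOn (dslope v w) (fun z => (z - w)⁻¹ • v z - (z - w)⁻¹ • v w)
          (sphere (0:ℂ) ρ) := by
        intro z hz
        rw [dslope_of_ne v (hne z hz), slope_def_module, smul_sub]
      rw [circleIntegral.integral_congr hρ.le hEq,
        circleIntegral.integral_sub (f := fun z => (z - w)⁻¹ • v z) (g := fun z => (z - w)⁻¹ • v w)
          ((hcρ.smul hvρ).circleIntegrable hρ.le)
          ((hcρ.smul continuousOn_const).circleIntegrable hρ.le),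
        circleIntegral.integral_smul_const]
    have hsR : ∀ z ∈ sphere (0:ℂ) R, z ≠ w := by
      intro z hz h
      rw [mem_sphere_zero_iff_norm] at hz
      rw [h] at hz; exact (ne_of_lt hwR) hz
    have hs1 : ∀ z ∈ sphere (0:ℂ) 1, z ≠ w := by
      intro z hz h
      rw [mem_sphere_zero_iff_norm] at hz
      rw [h] at hz; rw [hz] at hw; exact lt_irrefl 1 hw
    have hvR : ContinuousOn v (sphere (0:ℂ) R) := by
      apply hvc.mono
      intro z hz
      rw [mem_sphere_zero_iff_norm] at hz
      simp only [mem_setOf_eq, hz]; linarith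
    have hv1 : ContinuousOn v (sphere (0:ℂ) 1) := by
      apply hvc.mono
      intro z hz
      rw [mem_sphere_zero_iff_norm] at hz
      simp only [mem_setOf_eq, hz]
      exact le_refl 1
    have hIR : (∮ z in C(0, R), (z - w)⁻¹) = 2 * Real.pi * I :=
      circleIntegral.integral_sub_inv_of_mem_ball
        (by simpa [mem_ball, dist_eq_norm] using hwR)
    rw [hkey R (by linarith) hsR hvR, hkey 1 one_pos hs1 hv1, hI1v, hI1, hIR] at hann
    rw [zero_smul, sub_zero] at hann
    linear_combination hann
  have := limit_integral hvc hvl hK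
  exact smul_right_injective ℂ two_pi_I_ne_zero' this




/-- extension of interior_const to the closed ball by continuity -/
lemma interior_const_closed {u v : ℂ → ℂ} {c : ℂ}
    (huc : ContinuousOn u (closedBall 0 1)) (hud : DifferentiableOn ℂ u (ball 0 1))
    (hvc : ContinuousOn v {z : ℂ | 1 ≤ ‖z‖}) (hvd : DifferentiableOn ℂ v {z : ℂ | 1 < ‖z‖})
    (hvl : Tendsto v (comap (fun z : ℂ => ‖z‖) atTop) (nhds c))
    (heq : ∀ z : ℂ, ‖z‖ = 1 → u z = v z) :
    ∀ w ∈ closedBall (0:ℂ) 1, u w = c := by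
  have hball := interior_const huc hud hvc hvd hvl heq
  intro w hw
  rw [mem_closedBall, dist_eq_norm, sub_zero] at hw
  rcases lt_or_eq_of_le hw with h | h
  · exact hball w (by simpa [mem_ball, dist_eq_norm] using h)
  · -- ‖w‖ = 1 : approach from inside
    have hmem : w ∈ closedBall (0:ℂ) 1 := by
      simpa [mem_closedBall, dist_eq_norm] using hw
    have hcw : ContinuousWithinAt u (closedBall 0 1) w := huc w hmem
    have hev : Ioo (0:ℝ) 1 ∈ nhdsWithin (1:ℝ) (Iio 1) :=
      Ioo_mem_nhdsLT_of_mem (by constructor <;> norm_num)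
    have hpath : Tendsto (fun t : ℝ => (t:ℂ) * w) (nhdsWithin 1 (Iio 1))
        (nhdsWithin w (closedBall 0 1)) := by
      rw [tendsto_nhdsWithin_iff]
      constructor
      · have : Continuous fun t : ℝ => (t:ℂ) * w := by continuity
        have h1 := this.tendsto 1
        simp only [ofReal_one, one_mul] at h1
        exact h1.mono_left nhdsWithin_le_nhds
      · filter_upwards [hev] with t ht
        have : ‖(t:ℂ) * w‖ = t := by
          rw [norm_mul, h, mul_one, Complex.norm_real, Real.norm_eq_abs,
            abs_of_pos ht.1]
        simp only [mem_closedBall, dist_eq_norm, sub_zero, this]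
        exact ht.2.le
    have h1 : Tendsto (fun t : ℝ => u ((t:ℂ) * w)) (nhdsWithin 1 (Iio 1)) (nhds (u w)) :=
      hcw.tendsto.comp hpath
    have h2 : Tendsto (fun t : ℝ => u ((t:ℂ) * w)) (nhdsWithin 1 (Iio 1)) (nhds c) := by
      apply Tendsto.congr' _ tendsto_const_nhds
      filter_upwards [hev] with t ht
      have hmem' : (t:ℂ) * w ∈ ball (0:ℂ) 1 := by
        have : ‖(t:ℂ) * w‖ = t := by
          rw [norm_mul, h, mul_one, Complex.norm_real, Real.norm_eq_abs, abs_of_pos ht.1]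
        simp only [mem_ball, dist_eq_norm, sub_zero, this]
        exact ht.2
      exact (hball _ hmem').symm
    exact tendsto_nhds_unique h1 h2


/-- Uniqueness of Birkhoff-type decompositions with values in a complex
Banach–Lie group `G` on which holomorphic (complex analytic) functions separate points.
If `f₊ f₋ = g₊ g₋` on the unit circle and `f₋(∞) = g₋(∞)`, then `f₊ = g₊` on the closed
unit disk and `f₋ = g₋` on `{z : 1 ≤ |z|}`. -/
theorem stmt_1
    {E : Type*} [NormedAddCommGroup E] [NormedSpace ℂ E]
    {G : Type*} [TopologicalSpace G] [T2Space G] [ChartedSpace E G] [Group G]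
    [LieGroup 𝓘(ℂ, E) (⊤ : ℕ∞) G]
    (hsep : ∀ x y : G, x ≠ y → ∃ φ : G → ℂ,
      MDifferentiable 𝓘(ℂ, E) 𝓘(ℂ, ℂ) φ ∧ φ x ≠ φ y)
    (fp gp fm gm : ℂ → G) (Linf : G)
    (hfpc : ContinuousOn fp (closedBall 0 1))
    (hfpd : MDifferentiableOn 𝓘(ℂ, ℂ) 𝓘(ℂ, E) fp (ball 0 1))
    (hgpc : ContinuousOn gp (closedBall 0 1))
    (hgpd : MDifferentiableOn 𝓘(ℂ, ℂ) 𝓘(ℂ, E) gp (ball 0 1))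
    (hfmc : ContinuousOn fm {z : ℂ | 1 ≤ ‖z‖})
    (hfmd : MDifferentiableOn 𝓘(ℂ, ℂ) 𝓘(ℂ, E) fm {z : ℂ | 1 < ‖z‖})
    (hgmc : ContinuousOn gm {z : ℂ | 1 ≤ ‖z‖})
    (hgmd : MDifferentiableOn 𝓘(ℂ, ℂ) 𝓘(ℂ, E) gm {z : ℂ | 1 < ‖z‖})
    (hfml : Tendsto fm (comap (fun z : ℂ => ‖z‖) atTop) (nhds Linf))
    (hgml : Tendsto gm (comap (fun z : ℂ => ‖z‖) atTop) (nhds Linf))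
    (heq : ∀ z : ℂ, ‖z‖ = 1 → fp z * fm z = gp z * gm z) :
    Set.EqOn fp gp (closedBall 0 1) ∧ Set.EqOn fm gm {z : ℂ | 1 ≤ ‖z‖} := by
  haveI : IsTopologicalGroup G := topologicalGroup_of_lieGroup 𝓘(ℂ, E) ((⊤ : ℕ∞) : WithTop ℕ∞)
  -- the interior and exterior "quotient" maps
  set h : ℂ → G := fun z => (gp z)⁻¹ * fp z with hh
  set k : ℂ → G := fun z => gm z * (fm z)⁻¹ with hk
  have hmulG : MDifferentiable (𝓘(ℂ, E).prod 𝓘(ℂ, E)) 𝓘(ℂ, E) (fun p : G × G => p.1 * p.2) :=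
    (contMDiff_mul 𝓘(ℂ, E) ((⊤ : ℕ∞) : WithTop ℕ∞)).mdifferentiable (by simp)
  have hinvG : MDifferentiable 𝓘(ℂ, E) 𝓘(ℂ, E) (fun x : G => x⁻¹) :=
    (contMDiff_inv 𝓘(ℂ, E) ((⊤ : ℕ∞) : WithTop ℕ∞)).mdifferentiable (by simp)
  -- regularity of h
  have hhc : ContinuousOn h (closedBall 0 1) := hgpc.inv.mul hfpc
  have hhd : MDifferentiableOn 𝓘(ℂ, ℂ) 𝓘(ℂ, E) h (ball 0 1) := by
    have h1 : MDifferentiableOn 𝓘(ℂ, ℂ) 𝓘(ℂ, E) (fun z => (gp z)⁻¹) (ball 0 1) :=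
      (hinvG.mdifferentiableOn (s := univ)).comp hgpd (mapsTo_univ _ _)
    have h2 : MDifferentiableOn 𝓘(ℂ, ℂ) (𝓘(ℂ, E).prod 𝓘(ℂ, E))
        (fun z => ((gp z)⁻¹, fp z)) (ball 0 1) := h1.prodMk hfpd
    exact (hmulG.mdifferentiableOn (s := univ)).comp h2 (mapsTo_univ _ _)
  -- regularity of k
  have hkc : ContinuousOn k {z : ℂ | 1 ≤ ‖z‖} := hgmc.mul hfmc.inv
  have hkd : MDifferentiableOn 𝓘(ℂ, ℂ) 𝓘(ℂ, E) k {z : ℂ | 1 < ‖z‖} := by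
    have h1 : MDifferentiableOn 𝓘(ℂ, ℂ) 𝓘(ℂ, E) (fun z => (fm z)⁻¹) {z : ℂ | 1 < ‖z‖} :=
      (hinvG.mdifferentiableOn (s := univ)).comp hfmd (mapsTo_univ _ _)
    have h2 : MDifferentiableOn 𝓘(ℂ, ℂ) (𝓘(ℂ, E).prod 𝓘(ℂ, E))
        (fun z => (gm z, (fm z)⁻¹)) {z : ℂ | 1 < ‖z‖} := hgmd.prodMk h1
    exact (hmulG.mdifferentiableOn (s := univ)).comp h2 (mapsTo_univ _ _)
  -- limit of k at infinity
  have hkl : Tendsto k (comap (fun z : ℂ => ‖z‖) atTop) (nhds 1) := by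
    have := hgml.mul hfml.inv
    rwa [mul_inv_cancel] at this
  -- h = k on the unit circle
  have hhk : ∀ z : ℂ, ‖z‖ = 1 → h z = k z := by
    intro z hz
    have hz' := heq z hz
    simp only [hh, hk]
    calc (gp z)⁻¹ * fp z = (gp z)⁻¹ * (fp z * fm z) * (fm z)⁻¹ := by group
      _ = (gp z)⁻¹ * (gp z * gm z) * (fm z)⁻¹ := by rw [hz']
      _ = gm z * (fm z)⁻¹ := by group
  -- Part 1 : fp = gp on the closed ball
  have part1 : Set.EqOn fp gp (closedBall 0 1) := by
    intro w hw
    by_contra hne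
    have hne1 : h w ≠ 1 := by
      simp only [hh]
      intro hcon
      exact hne (inv_mul_eq_one.mp hcon).symm
    obtain ⟨φ, hφd, hφne⟩ := hsep (h w) 1 hne1
    have hφc : Continuous φ := hφd.continuous
    have huc : ContinuousOn (φ ∘ h) (closedBall 0 1) := hφc.comp_continuousOn hhc
    have hud : DifferentiableOn ℂ (φ ∘ h) (ball 0 1) :=
      ((hφd.mdifferentiableOn (s := univ)).comp hhd (mapsTo_univ _ _)).differentiableOn
    have hvc : ContinuousOn (φ ∘ k) {z : ℂ | 1 ≤ ‖z‖} := hφc.comp_continuousOn hkc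
    have hvd : DifferentiableOn ℂ (φ ∘ k) {z : ℂ | 1 < ‖z‖} :=
      ((hφd.mdifferentiableOn (s := univ)).comp hkd (mapsTo_univ _ _)).differentiableOn
    have hvl : Tendsto (φ ∘ k) (comap (fun z : ℂ => ‖z‖) atTop) (nhds (φ 1)) :=
      (hφc.tendsto 1).comp hkl
    have heq' : ∀ z : ℂ, ‖z‖ = 1 → (φ ∘ h) z = (φ ∘ k) z := by
      intro z hz
      simp only [Function.comp_apply, hhk z hz]
    have := interior_const_closed huc hud hvc hvd hvl heq' w hw
    exact hφne this
  -- Part 2 : fm = gm on {1 ≤ ‖z‖}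
  have part2 : Set.EqOn fm gm {z : ℂ | 1 ≤ ‖z‖} := by
    intro w hw
    rw [mem_setOf_eq] at hw
    rcases eq_or_lt_of_le hw with hweq | hwlt
    · -- on the circle : use part1 and cancellation
      have hw1 : w ∈ closedBall (0:ℂ) 1 := by
        simp [mem_closedBall, dist_eq_norm, ← hweq]
      have h1 := heq w hweq.symm
      have h2 := part1 hw1
      rw [h2] at h1
      exact mul_left_cancel h1
    · by_contra hne
      have hne1 : k w ≠ 1 := by
        simp only [hk]
        intro hcon
        exact hne (mul_inv_eq_one.mp hcon).symm
      obtain ⟨φ, hφd, hφne⟩ := hsep (k w) 1 hne1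
      have hφc : Continuous φ := hφd.continuous
      have huc : ContinuousOn (φ ∘ h) (closedBall 0 1) := hφc.comp_continuousOn hhc
      have hud : DifferentiableOn ℂ (φ ∘ h) (ball 0 1) :=
        ((hφd.mdifferentiableOn (s := univ)).comp hhd (mapsTo_univ _ _)).differentiableOn
      have hvc : ContinuousOn (φ ∘ k) {z : ℂ | 1 ≤ ‖z‖} := hφc.comp_continuousOn hkc
      have hvd : DifferentiableOn ℂ (φ ∘ k) {z : ℂ | 1 < ‖z‖} :=
        ((hφd.mdifferentiableOn (s := univ)).comp hkd (mapsTo_univ _ _)).differentiableOn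
      have hvl : Tendsto (φ ∘ k) (comap (fun z : ℂ => ‖z‖) atTop) (nhds (φ 1)) :=
        (hφc.tendsto 1).comp hkl
      have heq' : ∀ z : ℂ, ‖z‖ = 1 → (φ ∘ h) z = (φ ∘ k) z := by
        intro z hz
        simp only [Function.comp_apply, hhk z hz]
      have := exterior_const huc hud hvc hvd hvl heq' w hwlt
      exact hφne this
  exact ⟨part1, part2⟩
end

section
/- Let n ∈ ℕ and let A₊, Ã₊ : 𝔻̄ → M_n(ℂ) be continuous maps, holomorphic on 𝔻, with A₊(z), Ã₊(z) invertible for all z ∈ 𝔻̄. Let A₋, Ã₋ : {z ∈ ℂ : |z| ≥ 1} → M_n(ℂ) be continuous maps, holomorphic on {z : |z| > 1}, with invertible values, possessing invertible limits A₋(∞), Ã₋(∞) as |z| → ∞. Let κ₁ ≥ κ₂ ≥ ⋯ ≥ κ_n and ν₁ ≥ ν₂ ≥ ⋯ ≥ ν_n be integers, D(z) = diag(z^{κ₁},…,z^{κ_n}), D̃(z) = diag(z^{ν₁},…,z^{ν_n}). If A₊(z)D(z)A₋(z) = Ã₊(z)D̃(z)Ã₋(z) for all z ∈ 𝕊, then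 κ_j = ν_j for all j ∈ {1,…,n}, and there exists a map C : ℂ → M_n(ℂ) with C(z) invertible for every z ∈ ℂ, whose entries c_{kj} are polynomial functions of z, such that Ã₊(z) = A₊(z)C(z) for all z ∈ 𝔻̄, Ã₋(z) = D(z)⁻¹C(z)⁻¹D(z)A₋(z) for all z with |z| ≥ 1, and such that for all j,k ∈ {1,…,n}: c_{kj} = 0 if κ_k < κ_j, c_{kj} is constant if κ_k = κ_j, and c_{kj} is a polynomial of degree ≤ κ_k − κ_j if κ_k > κ_j. -/
open Metric Filter

/-- The diagonal matrix `D(z) = diag(z^{κ₁}, …, z^{κ_n})`. -/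
noncomputable def diagZ (n : ℕ) (κ : Fin n → ℤ) (z : ℂ) : Matrix (Fin n) (Fin n) ℂ :=
  Matrix.diagonal fun i => z ^ κ i

namespace BirkhoffAux

open Set Polynomial

variable {n : ℕ}

lemma contOn_matrix {M : ℂ → Matrix (Fin n) (Fin n) ℂ} {s : Set ℂ}
    (h : ∀ i j, ContinuousOn (fun z => M z i j) s) : ContinuousOn M s := by
  rw [continuousOn_iff_continuous_restrict]
  exact continuous_matrix fun i j => continuousOn_iff_continuous_restrict.mp (h i j)

lemma contOn_det {M : ℂ → Matrix (Fin n) (Fin n) ℂ} {s : Set ℂ}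
    (h : ∀ i j, ContinuousOn (fun z => M z i j) s) :
    ContinuousOn (fun z => (M z).det) s := by
  rw [continuousOn_iff_continuous_restrict]
  exact Continuous.matrix_det (continuous_matrix fun i j => continuousOn_iff_continuous_restrict.mp (h i j))

lemma contOn_adj {M : ℂ → Matrix (Fin n) (Fin n) ℂ} {s : Set ℂ}
    (h : ∀ i j, ContinuousOn (fun z => M z i j) s) (i j : Fin n) :
    ContinuousOn (fun z => (M z).adjugate i j) s := by
  rw [continuousOn_iff_continuous_restrict]
  exact Continuous.matrix_elem (Continuous.matrix_adjugate
    (continuous_matrix fun i j => continuousOn_iff_continuous_restrict.mp (h i j))) i j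

lemma diffOn_det {M : ℂ → Matrix (Fin n) (Fin n) ℂ} {s : Set ℂ}
    (h : ∀ i j, DifferentiableOn ℂ (fun z => M z i j) s) :
    DifferentiableOn ℂ (fun z => (M z).det) s := by
  simp only [Matrix.det_apply']
  exact DifferentiableOn.fun_sum fun σ _ =>
    ((DifferentiableOn.fun_finset_prod (fun i _ => h (σ i) i)).const_mul _)

lemma diffOn_adj {M : ℂ → Matrix (Fin n) (Fin n) ℂ} {s : Set ℂ}
    (h : ∀ i j, DifferentiableOn ℂ (fun z => M z i j) s) (i j : Fin n) :
    DifferentiableOn ℂ (fun z => (M z).adjugate i j) s := by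
  simp only [Matrix.adjugate_apply]
  apply diffOn_det
  intro k l
  simp only [Matrix.updateRow_apply]
  by_cases hk : k = j <;> simp [hk, h k l, differentiableOn_const]

lemma det_ne_zero_of_isUnit {A : Matrix (Fin n) (Fin n) ℂ} (h : IsUnit A) : A.det ≠ 0 :=
  ((Matrix.isUnit_iff_isUnit_det A).mp h).ne_zero

lemma inv_entry_eq (A : Matrix (Fin n) (Fin n) ℂ) (i j : Fin n) :
    A⁻¹ i j = (A.det)⁻¹ * A.adjugate i j := by
  rw [Matrix.inv_def, Matrix.smul_apply, Ring.inverse_eq_inv', smul_eq_mul]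

lemma contOn_inv {M : ℂ → Matrix (Fin n) (Fin n) ℂ} {s : Set ℂ}
    (h : ∀ i j, ContinuousOn (fun z => M z i j) s)
    (hu : ∀ z ∈ s, IsUnit (M z)) (i j : Fin n) :
    ContinuousOn (fun z => (M z)⁻¹ i j) s := by
  simp only [inv_entry_eq]
  exact ((contOn_det h).inv₀ fun z hz => det_ne_zero_of_isUnit (hu z hz)).mul (contOn_adj h i j)

lemma diffOn_inv {M : ℂ → Matrix (Fin n) (Fin n) ℂ} {s : Set ℂ}
    (h : ∀ i j, DifferentiableOn ℂ (fun z => M z i j) s)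
    (hu : ∀ z ∈ s, IsUnit (M z)) (i j : Fin n) :
    DifferentiableOn ℂ (fun z => (M z)⁻¹ i j) s := by
  simp only [inv_entry_eq]
  exact ((diffOn_det h).inv fun z hz => det_ne_zero_of_isUnit (hu z hz)).mul (diffOn_adj h i j)

lemma contOn_mul {M N : ℂ → Matrix (Fin n) (Fin n) ℂ} {s : Set ℂ}
    (hM : ∀ i j, ContinuousOn (fun z => M z i j) s)
    (hN : ∀ i j, ContinuousOn (fun z => N z i j) s) (i j : Fin n) :
    ContinuousOn (fun z => (M z * N z) i j) s := by
  simp only [Matrix.mul_apply]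
  rw [continuousOn_iff_continuous_restrict]
  apply continuous_finset_sum
  intro l _
  exact ((continuousOn_iff_continuous_restrict.mp (hM i l))).mul
    ((continuousOn_iff_continuous_restrict.mp (hN l j)))

lemma diffOn_mul {M N : ℂ → Matrix (Fin n) (Fin n) ℂ} {s : Set ℂ}
    (hM : ∀ i j, DifferentiableOn ℂ (fun z => M z i j) s)
    (hN : ∀ i j, DifferentiableOn ℂ (fun z => N z i j) s) (i j : Fin n) :
    DifferentiableOn ℂ (fun z => (M z * N z) i j) s := by
  simp only [Matrix.mul_apply]
  exact DifferentiableOn.fun_sum fun l _ => (hM i l).mul (hN l j)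

lemma tendsto_matrix {M : ℂ → Matrix (Fin n) (Fin n) ℂ} {l : Filter ℂ}
    {L : Matrix (Fin n) (Fin n) ℂ}
    (h : ∀ i j, Tendsto (fun z => M z i j) l (nhds (L i j))) :
    Tendsto M l (nhds L) := by
  refine tendsto_pi_nhds.mpr ?_; intro i; rw [tendsto_pi_nhds]; intro j; exact h i j

lemma tendsto_inv_entry {M : ℂ → Matrix (Fin n) (Fin n) ℂ} {l : Filter ℂ}
    {L : Matrix (Fin n) (Fin n) ℂ}
    (h : ∀ i j, Tendsto (fun z => M z i j) l (nhds (L i j))) (hL : IsUnit L) (i j : Fin n) :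
    Tendsto (fun z => (M z)⁻¹ i j) l (nhds (L⁻¹ i j)) := by
  have hM := tendsto_matrix h
  have hdet : Tendsto (fun z => (M z).det) l (nhds L.det) :=
    ((Continuous.matrix_det continuous_id).tendsto L).comp hM
  have hadj : Tendsto (fun z => (M z).adjugate i j) l (nhds (L.adjugate i j)) :=
    (((Continuous.matrix_adjugate continuous_id).matrix_elem i j).tendsto L).comp hM
  have hdet0 : L.det ≠ 0 := ((Matrix.isUnit_iff_isUnit_det L).mp hL).ne_zero
  simp only [Matrix.inv_def, Matrix.smul_apply, Ring.inverse_eq_inv', smul_eq_mul]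
  exact (hdet.inv₀ hdet0).mul hadj

lemma tendsto_mul_entry {M N : ℂ → Matrix (Fin n) (Fin n) ℂ} {l : Filter ℂ}
    {L K : Matrix (Fin n) (Fin n) ℂ}
    (hM : ∀ i j, Tendsto (fun z => M z i j) l (nhds (L i j)))
    (hN : ∀ i j, Tendsto (fun z => N z i j) l (nhds (K i j))) (i j : Fin n) :
    Tendsto (fun z => (M z * N z) i j) l (nhds ((L * K) i j)) := by
  simp only [Matrix.mul_apply]
  exact tendsto_finset_sum _ fun k _ => (hM i k).mul (hN k j)

/-- boundedness on `{1 ≤ ‖z‖}` from continuity plus a limit at infinity -/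
lemma bounded_of_tendsto {f : ℂ → ℂ} {L : ℂ}
    (hc : ContinuousOn f {z : ℂ | 1 ≤ ‖z‖})
    (hl : Tendsto f (comap (fun z : ℂ => ‖z‖) atTop) (nhds L)) :
    ∃ M : ℝ, 0 ≤ M ∧ ∀ z : ℂ, 1 ≤ ‖z‖ → ‖f z‖ ≤ M := by
  have h1 : f ⁻¹' ball L 1 ∈ comap (fun z : ℂ => ‖z‖) atTop :=
    hl (ball_mem_nhds L one_pos)
  rcases mem_comap.mp h1 with ⟨t, ht, hsub⟩
  rcases mem_atTop_sets.mp ht with ⟨R, hR⟩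
  set R' : ℝ := max R 1 with hR'
  have hK : IsCompact (closedBall (0 : ℂ) R' ∩ {z : ℂ | 1 ≤ ‖z‖}) := by
    apply (isCompact_closedBall (0:ℂ) R').inter_right
    exact isClosed_le continuous_const continuous_norm
  obtain ⟨C, hC⟩ := hK.exists_bound_of_continuousOn
    (hc.mono (fun z hz => hz.2))
  refine ⟨max (max C (‖L‖ + 1)) 0, le_max_right _ _, fun z hz => ?_⟩
  rcases le_total ‖z‖ R' with h | h
  · have : z ∈ closedBall (0 : ℂ) R' ∩ {z : ℂ | 1 ≤ ‖z‖} := by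
      constructor
      · simpa [mem_closedBall, dist_eq_norm] using h
      · exact hz
    exact le_trans (hC z this) (le_trans (le_max_left _ _) (le_max_left _ _))
  · have hzR : R ≤ ‖z‖ := le_trans (le_trans (le_max_left R 1) h) le_rfl
    have : z ∈ f ⁻¹' ball L 1 := hsub (hR ‖z‖ hzR)
    have hd : ‖f z - L‖ < 1 := by simpa [mem_ball, dist_eq_norm] using this
    have : ‖f z‖ ≤ ‖L‖ + 1 := by
      calc ‖f z‖ = ‖f z - L + L‖ := by ring_nf
      _ ≤ ‖f z - L‖ + ‖L‖ := norm_add_le _ _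
      _ ≤ ‖L‖ + 1 := by linarith
    exact le_trans this (le_trans (le_max_right _ _) (le_max_left _ _))

lemma diagZ_isUnit {κ : Fin n → ℤ} {z : ℂ} (hz : z ≠ 0) : IsUnit (diagZ n κ z) := by
  rw [Matrix.isUnit_iff_isUnit_det, diagZ, Matrix.det_diagonal]
  exact (Finset.prod_ne_zero_iff.mpr (fun i _ => zpow_ne_zero _ hz)).isUnit

lemma diagZ_inv {κ : Fin n → ℤ} {z : ℂ} (hz : z ≠ 0) :
    (diagZ n κ z)⁻¹ = diagZ n (fun i => -κ i) z := by
  apply Matrix.inv_eq_right_inv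
  rw [diagZ, diagZ, Matrix.diagonal_mul_diagonal]
  have : (fun i => z ^ κ i * z ^ (-κ i)) = fun _ : Fin n => (1 : ℂ) := by
    funext i; rw [← zpow_add₀ hz]; simp
  rw [this, Matrix.diagonal_one]

/-- if `P` has a zero lower-left block that is too large, its determinant vanishes -/
lemma det_zero_block (P : Matrix (Fin n) (Fin n) ℂ) (r : Fin n)
    (h : ∀ k j, r ≤ k → j ≤ r → P k j = 0) : P.det = 0 := by
  rw [Matrix.det_apply']
  apply Finset.sum_eq_zero
  intro σ _
  -- there exists j ≤ r with r ≤ σ j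
  have : ∃ j : Fin n, j ≤ r ∧ r ≤ σ j := by
    by_contra hcon
    push_neg at hcon
    have hmaps : ∀ j ∈ Finset.Iic r, σ j ∈ Finset.Iio r := by
      intro j hj
      simp only [Finset.mem_Iic] at hj
      simp only [Finset.mem_Iio]
      exact hcon j hj
    have hcard := Finset.card_le_card_of_injOn σ hmaps
      (fun a _ b _ hab => σ.injective hab)
    rw [Fin.card_Iic, Fin.card_Iio] at hcard
    omega
  obtain ⟨j, hj1, hj2⟩ := this
  rw [Finset.prod_eq_zero (f := fun i => P (σ i) i) (Finset.mem_univ j) (h (σ j) j hj2 hj1), mul_zero]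

/-- Core lemma: a function holomorphic on the disk that agrees on the circle with a function
holomorphic outside with growth `M‖z‖^d` is a polynomial with coefficients vanishing above `d`. -/
lemma coeff_vanish {f g : ℂ → ℂ} {d : ℤ} {M : ℝ}
    (hfc : ContinuousOn f (closedBall 0 1)) (hfd : DifferentiableOn ℂ f (ball 0 1))
    (hgc : ContinuousOn g {z : ℂ | 1 ≤ ‖z‖}) (hgd : DifferentiableOn ℂ g {z : ℂ | 1 < ‖z‖})
    (hb : ∀ z : ℂ, 1 ≤ ‖z‖ → ‖g z‖ ≤ M * ‖z‖ ^ d)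
    (hfg : ∀ z : ℂ, ‖z‖ = 1 → f z = g z) :
    ∃ p : Polynomial ℂ, (∀ m : ℕ, d < (m : ℤ) → p.coeff m = 0) ∧
      ∀ z ∈ closedBall (0 : ℂ) 1, f z = p.eval z := by
  have hM : 0 ≤ M := by
    have h1 := hb 1 (by simp)
    simp only [norm_one, one_zpow, mul_one] at h1
    exact le_trans (norm_nonneg _) h1
  have hopen : IsOpen {z : ℂ | 1 < ‖z‖} := isOpen_lt continuous_const continuous_norm
  -- power series of f on the unit ball
  have hps : HasFPowerSeriesOnBall f (cauchyPowerSeries f 0 1) 0 1 := by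
    have := Complex.hasFPowerSeriesOnBall_of_differentiable_off_countable
      (R := 1) (c := (0:ℂ)) (f := f) (s := ∅) countable_empty
      (by simpa using hfc)
      (fun z hz => hfd.differentiableAt (isOpen_ball.mem_nhds (by simpa using hz.1)))
      one_pos
    simpa using this
  set a : ℕ → ℂ := fun m => (cauchyPowerSeries f 0 1).coeff m with ha
  -- vanishing of high coefficients
  have hvan : ∀ m : ℕ, d < (m : ℤ) → a m = 0 := by
    intro m hm
    have h1 : a m = (2 * Real.pi * Complex.I)⁻¹ •
        ∮ z in C(0, 1), z⁻¹ ^ m * (z⁻¹ * f z) := by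
      simp [ha, FormalMultilinearSeries.coeff, cauchyPowerSeries,
        ContinuousMultilinearMap.mkPiRing_apply, smul_eq_mul, mul_assoc]
    set I1 : ℂ := ∮ z in C(0, 1), z⁻¹ ^ m * (z⁻¹ * f z) with hI1
    suffices hI : I1 = 0 by rw [h1, hI, smul_zero]
    have hcong : I1 = ∮ z in C(0, 1), z⁻¹ ^ m * (z⁻¹ * g z) := by
      apply circleIntegral.integral_congr zero_le_one
      intro z hz
      have h1 : ‖z‖ = 1 := by simpa [mem_sphere_iff_norm] using hz
      simp only [hfg z h1]
    have hann : ∀ R : ℝ, 1 ≤ R →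
        (∮ z in C(0, R), z⁻¹ ^ m * (z⁻¹ * g z)) = ∮ z in C(0, 1), z⁻¹ ^ m * (z⁻¹ * g z) := by
      intro R hR
      apply Complex.circleIntegral_eq_of_differentiable_on_annulus_off_countable
        one_pos hR countable_empty
      · intro z hz
        have hz1 : 1 ≤ ‖z‖ := by
          have := hz.2
          simpa [mem_ball, dist_eq_norm, not_lt] using this
        have hz0 : z ≠ 0 := fun h => by simp [h] at hz1; linarith
        have hc1 : ContinuousWithinAt (fun z : ℂ => z⁻¹ ^ m * (z⁻¹ * g z))
            (closedBall 0 R \ ball 0 1) z := by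
          apply ContinuousWithinAt.mul
          · exact ((continuousAt_inv₀ hz0).continuousWithinAt).pow m
          · exact ((continuousAt_inv₀ hz0).continuousWithinAt).mul
              ((hgc z hz1).mono (fun w hw => by
                have := hw.2
                simpa [mem_ball, dist_eq_norm, not_lt] using this))
        exact hc1
      · intro z hz
        have hz1 : 1 < ‖z‖ := by
          have := hz.1.2
          simpa [mem_closedBall, dist_eq_norm, not_le] using this
        have hz0 : z ≠ 0 := fun h => by simp [h] at hz1; linarith
        exact ((differentiableAt_inv hz0).pow m).mul
          ((differentiableAt_inv hz0).mul (hgd.differentiableAt (hopen.mem_nhds hz1)))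
    have hbound : ∀ R : ℝ, 1 ≤ R → ‖I1‖ ≤ 2 * Real.pi * M * R ^ (d - m) := by
      intro R hR
      have hR0 : (0 : ℝ) < R := lt_of_lt_of_le one_pos hR
      rw [hcong, ← hann R hR]
      have hCb : ∀ z ∈ sphere (0 : ℂ) R, ‖z⁻¹ ^ m * (z⁻¹ * g z)‖ ≤
          M * (R ^ (d - (m : ℤ) - 1)) := by
        intro z hz
        have hzn : ‖z‖ = R := by simpa [mem_sphere_iff_norm] using hz
        have hz1 : 1 ≤ ‖z‖ := hzn ▸ hR
        have hgz := hb z hz1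
        rw [hzn] at hgz
        simp only [norm_mul, norm_pow, norm_inv, hzn]
        calc R⁻¹ ^ m * (R⁻¹ * ‖g z‖) ≤ R⁻¹ ^ m * (R⁻¹ * (M * R ^ d)) := by
              apply mul_le_mul_of_nonneg_left
              · apply mul_le_mul_of_nonneg_left (hzn ▸ hgz) (by positivity)
              · positivity
          _ = M * (R ^ (d - (m : ℤ) - 1)) := by
              rw [inv_pow, ← zpow_natCast R m, ← zpow_neg, ← zpow_neg_one R]
              rw [show d - (m : ℤ) - 1 = -(m : ℤ) + (-1 + d) by ring]
              rw [zpow_add₀ hR0.ne', zpow_add₀ hR0.ne']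
              ring
      have := circleIntegral.norm_integral_le_of_norm_le_const (le_of_lt hR0) hCb
      calc ‖∮ z in C(0, R), z⁻¹ ^ m * (z⁻¹ * g z)‖
          ≤ 2 * Real.pi * R * (M * R ^ (d - (m : ℤ) - 1)) := this
        _ = 2 * Real.pi * M * R ^ (d - m) := by
            rw [show d - (m : ℤ) = 1 + (d - (m : ℤ) - 1) by ring, zpow_add₀ hR0.ne', zpow_one]
            ring
    have htend : Tendsto (fun R : ℝ => 2 * Real.pi * M * R ^ (d - m)) atTop (nhds 0) := by
      have hdm : d - (m : ℤ) < 0 := by omega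
      have := (tendsto_zpow_atTop_zero (𝕜 := ℝ) hdm).const_mul (2 * Real.pi * M)
      simpa using this
    have hle : ‖I1‖ ≤ 0 :=
      ge_of_tendsto htend (eventually_atTop.2 ⟨1, fun R hR => hbound R hR⟩)
    exact norm_le_zero_iff.mp hle
  -- the polynomial
  set N : ℕ := d.toNat + 1 with hN
  set p : Polynomial ℂ := ∑ m ∈ Finset.range N, Polynomial.C (a m) * Polynomial.X ^ m with hp
  have hpc : ∀ mm : ℕ, p.coeff mm = if mm < N then a mm else 0 := by
    intro mm
    rw [hp, Polynomial.finset_sum_coeff]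
    simp only [Polynomial.coeff_C_mul, Polynomial.coeff_X_pow, mul_ite, mul_one, mul_zero]
    rw [Finset.sum_ite_eq (Finset.range N) mm a, if_congr Finset.mem_range rfl rfl]
  have hvanN : ∀ m : ℕ, m ∉ Finset.range N → a m = 0 := by
    intro m hm
    apply hvan
    simp only [Finset.mem_range, not_lt] at hm
    have : d ≤ (d.toNat : ℤ) := Int.self_le_toNat d
    omega
  have hball : ∀ w ∈ ball (0 : ℂ) 1, f w = p.eval w := by
    intro w hw
    have hmem : w ∈ Metric.eball (0 : ℂ) 1 := by
      rw [mem_emetric_ball_zero_iff]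
      have : ‖w‖ < 1 := by simpa [mem_ball, dist_eq_norm] using hw
      rw [← ofReal_norm]; exact ENNReal.ofReal_lt_one.mpr this
    have hsum := hps.hasSum (by simpa using hmem)
    rw [zero_add] at hsum
    have hsum' : HasSum (fun m => w ^ m • a m) (f w) := by
      simpa [FormalMultilinearSeries.apply_eq_pow_smul_coeff] using hsum
    have hsum2 : HasSum (fun m => w ^ m • a m) (∑ m ∈ Finset.range N, w ^ m • a m) :=
      hasSum_sum_of_ne_finset_zero (fun m hm => by rw [hvanN m hm, smul_zero])
    rw [hsum'.unique hsum2, hp]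
    rw [Polynomial.eval_finset_sum]
    apply Finset.sum_congr rfl
    intro m _
    rw [Polynomial.eval_mul, Polynomial.eval_C, Polynomial.eval_pow, Polynomial.eval_X,
      smul_eq_mul, mul_comm]
  have heqcl : EqOn f (fun w => p.eval w) (closedBall 0 1) := by
    have h1 : EqOn f (fun w => p.eval w) (ball 0 1) := hball
    exact h1.of_subset_closure hfc ((p.continuous_aeval).continuousOn)
      ball_subset_closedBall (by rw [closure_ball (0:ℂ) one_ne_zero])
  refine ⟨p, ?_, fun z hz => heqcl hz⟩
  intro m hm
  rw [hpc m]
  split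
  · exact hvan m hm
  · rfl

lemma ext_zero {g : ℂ → ℂ} {M : ℝ}
    (hgc : ContinuousOn g {z : ℂ | 1 ≤ ‖z‖}) (hgd : DifferentiableOn ℂ g {z : ℂ | 1 < ‖z‖})
    (hb : ∀ z : ℂ, 1 ≤ ‖z‖ → ‖g z‖ ≤ M)
    (h0 : ∀ z : ℂ, ‖z‖ = 1 → g z = 0) : ∀ z : ℂ, 1 ≤ ‖z‖ → g z = 0 := by
  have hopen : IsOpen {z : ℂ | 1 < ‖z‖} := isOpen_lt continuous_const continuous_norm
  set h : ℂ → ℂ := fun w => g w⁻¹ with hh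
  have hmaps : ∀ w : ℂ, w ∈ ball (0:ℂ) 1 \ {0} → 1 < ‖w⁻¹‖ := by
    intro w hw
    have h1 : ‖w‖ < 1 := by simpa [mem_ball, dist_eq_norm] using hw.1
    have hw0 : w ≠ 0 := hw.2
    rw [norm_inv]
    exact (one_lt_inv₀ (norm_pos_iff.mpr hw0)).mpr h1
  have hd : DifferentiableOn ℂ h (ball 0 1 \ {0}) := by
    intro w hw
    have hw0 : w ≠ 0 := hw.2
    exact ((hgd.differentiableAt (hopen.mem_nhds (hmaps w hw))).comp w
      (differentiableAt_inv hw0)).differentiableWithinAt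
  have hbdd : BddAbove (norm ∘ h '' (ball 0 1 \ {0})) := by
    refine ⟨M, fun x hx => ?_⟩
    rcases hx with ⟨w, hw, rfl⟩
    exact hb _ (le_of_lt (hmaps w hw))
  set h' : ℂ → ℂ := Function.update h 0 (limUnder (nhdsWithin 0 {(0:ℂ)}ᶜ) h) with hh'
  have hd' : DifferentiableOn ℂ h' (ball 0 1) :=
    Complex.differentiableOn_update_limUnder_of_bddAbove (ball_mem_nhds 0 one_pos) hd hbdd
  have hcball : ContinuousOn h' (closedBall 0 1) := by
    intro w hw
    by_cases hw0 : w = 0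
    · subst hw0
      exact ((hd'.differentiableAt
        (isOpen_ball.mem_nhds (mem_ball_self one_pos))).continuousAt).continuousWithinAt
    · have hcw : ContinuousWithinAt h (closedBall 0 1 \ {0}) w := by
        have hmem : (1:ℝ) ≤ ‖w⁻¹‖ := by
          rw [norm_inv]
          have h1 : ‖w‖ ≤ 1 := by simpa [mem_closedBall, dist_eq_norm] using hw
          exact (one_le_inv₀ (norm_pos_iff.mpr hw0)).mpr h1
        apply ContinuousWithinAt.comp (hgc w⁻¹ hmem)
          ((continuousAt_inv₀ hw0).continuousWithinAt)
        intro x hx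
        have hx0 : x ≠ 0 := hx.2
        have h1 : ‖x‖ ≤ 1 := by simpa [mem_closedBall, dist_eq_norm] using hx.1
        simp only [mem_setOf_eq, norm_inv]
        exact (one_le_inv₀ (norm_pos_iff.mpr hx0)).mpr h1
      have heq' : EqOn h' h (closedBall 0 1 \ {0}) := fun x hx =>
        Function.update_of_ne hx.2 _ _
      have hcw' : ContinuousWithinAt h' (closedBall 0 1 \ {0}) w :=
        (hcw.congr heq' (Function.update_of_ne hw0 _ _))
      rw [diff_eq] at hcw'
      exact (continuousWithinAt_inter (isOpen_compl_singleton.mem_nhds hw0)).mp hcw'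
  have hdc : DiffContOnCl ℂ h' (ball 0 1) :=
    ⟨hd', by rwa [closure_ball (0:ℂ) one_ne_zero]⟩
  have hzero : ∀ w ∈ closedBall (0:ℂ) 1, ‖h' w‖ ≤ 0 := by
    intro w hw
    apply Complex.norm_le_of_forall_mem_frontier_norm_le isBounded_ball hdc
    · intro x hx
      rw [frontier_ball (0:ℂ) one_ne_zero] at hx
      have hx1 : ‖x‖ = 1 := by simpa [mem_sphere_iff_norm] using hx
      have hx0 : x ≠ 0 := by intro hc; rw [hc] at hx1; simp at hx1
      rw [hh', Function.update_of_ne hx0]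
      have : ‖x⁻¹‖ = 1 := by rw [norm_inv, hx1]; norm_num
      simp [hh, h0 _ this]
    · rwa [closure_ball (0:ℂ) one_ne_zero]
  intro z hz
  have hz0 : z ≠ 0 := by
    intro hc; rw [hc] at hz; simp at hz; linarith
  have hzi : z⁻¹ ∈ closedBall (0:ℂ) 1 := by
    simp only [mem_closedBall, dist_zero_right, norm_inv]
    exact inv_le_one_of_one_le₀ hz
  have hzi0 : z⁻¹ ≠ 0 := inv_ne_zero hz0
  have hval : h' z⁻¹ = g z := by
    rw [hh', Function.update_of_ne hzi0]
    simp [hh]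
  have := norm_le_zero_iff.mp (hzero _ hzi)
  rwa [hval] at this

lemma isUnit_nonsing_inv {A : Matrix (Fin n) (Fin n) ℂ} (h : IsUnit A) : IsUnit A⁻¹ := by
  rw [Matrix.isUnit_iff_isUnit_det] at *
  rw [Matrix.det_nonsing_inv, Ring.inverse_eq_inv', isUnit_iff_ne_zero]
  exact inv_ne_zero h.ne_zero

lemma diag_entry (dl dr : Fin n → ℂ) (B : Matrix (Fin n) (Fin n) ℂ) (k j : Fin n) :
    (Matrix.diagonal dl * B * Matrix.diagonal dr) k j = dl k * B k j * dr j := by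
  rw [Matrix.mul_diagonal, Matrix.diagonal_mul]

lemma diagZ_mul_neg {κ : Fin n → ℤ} {z : ℂ} (hz : z ≠ 0) :
    diagZ n (fun i => -κ i) z * diagZ n κ z = 1 := by
  rw [diagZ, diagZ, Matrix.diagonal_mul_diagonal]
  have : (fun i => z ^ (-κ i) * z ^ κ i) = fun _ : Fin n => (1 : ℂ) := by
    funext i; rw [← zpow_add₀ hz]; simp
  rw [this, Matrix.diagonal_one]

lemma key (Ap Atp Am Atm : ℂ → Matrix (Fin n) (Fin n) ℂ)
    (Linf Ltinf : Matrix (Fin n) (Fin n) ℂ) (κ ν : Fin n → ℤ)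
    (hApc : ∀ i j, ContinuousOn (fun z => Ap z i j) (closedBall 0 1))
    (hApd : ∀ i j, DifferentiableOn ℂ (fun z => Ap z i j) (ball 0 1))
    (hApu : ∀ z ∈ closedBall (0 : ℂ) 1, IsUnit (Ap z))
    (hAtpc : ∀ i j, ContinuousOn (fun z => Atp z i j) (closedBall 0 1))
    (hAtpd : ∀ i j, DifferentiableOn ℂ (fun z => Atp z i j) (ball 0 1))
    (hAtpu : ∀ z ∈ closedBall (0 : ℂ) 1, IsUnit (Atp z))
    (hAmc : ∀ i j, ContinuousOn (fun z => Am z i j) {z : ℂ | 1 ≤ ‖z‖})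
    (hAmd : ∀ i j, DifferentiableOn ℂ (fun z => Am z i j) {z : ℂ | 1 < ‖z‖})
    (hAmu : ∀ z : ℂ, 1 ≤ ‖z‖ → IsUnit (Am z))
    (hAml : ∀ i j, Tendsto (fun z => Am z i j)
      (comap (fun z : ℂ => ‖z‖) atTop) (nhds (Linf i j)))
    (hAtmc : ∀ i j, ContinuousOn (fun z => Atm z i j) {z : ℂ | 1 ≤ ‖z‖})
    (hAtmd : ∀ i j, DifferentiableOn ℂ (fun z => Atm z i j) {z : ℂ | 1 < ‖z‖})
    (hAtmu : ∀ z : ℂ, 1 ≤ ‖z‖ → IsUnit (Atm z))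
    (hAtml : ∀ i j, Tendsto (fun z => Atm z i j)
      (comap (fun z : ℂ => ‖z‖) atTop) (nhds (Ltinf i j)))
    (hLtu : IsUnit Ltinf)
    (heq : ∀ z : ℂ, ‖z‖ = 1 →
      Ap z * diagZ n κ z * Am z = Atp z * diagZ n ν z * Atm z) :
    ∃ p : Fin n → Fin n → Polynomial ℂ,
      (∀ k j (m : ℕ), (κ k - ν j) < (m : ℤ) → (p k j).coeff m = 0) ∧
      (∀ z ∈ closedBall (0 : ℂ) 1, Atp z = Ap z * Matrix.of fun k j => (p k j).eval z) ∧
      (∀ z : ℂ, 1 ≤ ‖z‖ → (Matrix.of fun k j => (p k j).eval z)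
          = diagZ n κ z * (Am z * (Atm z)⁻¹) * diagZ n (fun i => -ν i) z) ∧
      (∀ z : ℂ, IsUnit (Matrix.of fun k j => (p k j).eval z)) := by
  have hSEc : ∀ z : ℂ, z ∈ {z : ℂ | 1 ≤ ‖z‖} ↔ 1 ≤ ‖z‖ := fun z => Iff.rfl
  have hSOopen : IsOpen {z : ℂ | 1 < ‖z‖} := isOpen_lt continuous_const continuous_norm
  have hne0 : ∀ z : ℂ, (1:ℝ) ≤ ‖z‖ → z ≠ 0 := by
    intro z hz hc; rw [hc] at hz; simp at hz; linarith
  set F : ℂ → Matrix (Fin n) (Fin n) ℂ := fun z => (Ap z)⁻¹ * Atp z with hF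
  set Bm : ℂ → Matrix (Fin n) (Fin n) ℂ := fun z => Am z * (Atm z)⁻¹ with hBm
  have hAtmuSE : ∀ z ∈ {z : ℂ | 1 ≤ ‖z‖}, IsUnit (Atm z) := fun z hz => hAtmu z hz
  have hAtmuSO : ∀ z ∈ {z : ℂ | 1 < ‖z‖}, IsUnit (Atm z) := fun z hz => hAtmu z (le_of_lt hz)
  have hFc : ∀ k j, ContinuousOn (fun z => F z k j) (closedBall 0 1) :=
    fun k j => contOn_mul (fun i j => contOn_inv hApc hApu i j) hAtpc k j
  have hFd : ∀ k j, DifferentiableOn ℂ (fun z => F z k j) (ball 0 1) := by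
    intro k j
    apply diffOn_mul (fun i j => diffOn_inv hApd (fun z hz => hApu z (ball_subset_closedBall hz)) i j)
      (fun i j => (hAtpd i j)) k j
  have hBmc : ∀ k j, ContinuousOn (fun z => Bm z k j) {z : ℂ | 1 ≤ ‖z‖} :=
    fun k j => contOn_mul hAmc (fun i j => contOn_inv hAtmc hAtmuSE i j) k j
  have hBmd : ∀ k j, DifferentiableOn ℂ (fun z => Bm z k j) {z : ℂ | 1 < ‖z‖} := by
    intro k j
    apply diffOn_mul (fun i j => hAmd i j) (fun i j => diffOn_inv hAtmd hAtmuSO i j) k j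
  have hBml : ∀ i j, Tendsto (fun z => Bm z i j)
      (comap (fun z : ℂ => ‖z‖) atTop) (nhds ((Linf * Ltinf⁻¹) i j)) :=
    fun i j => tendsto_mul_entry hAml (tendsto_inv_entry hAtml hLtu) i j
  -- circle identity at matrix level
  have hcirc : ∀ z : ℂ, ‖z‖ = 1 →
      F z = diagZ n κ z * Bm z * diagZ n (fun i => -ν i) z := by
    intro z hz
    have hz1 : (1:ℝ) ≤ ‖z‖ := le_of_eq hz.symm
    have hz0 : z ≠ 0 := hne0 z hz1
    have hzc : z ∈ closedBall (0:ℂ) 1 := by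
      simp [mem_closedBall, dist_eq_norm, hz]
    have hApdet : IsUnit (Ap z).det := (Matrix.isUnit_iff_isUnit_det _).mp (hApu z hzc)
    have hAtmdet : IsUnit (Atm z).det := (Matrix.isUnit_iff_isUnit_det _).mp (hAtmu z hz1)
    have h2 : Atp z * diagZ n ν z = Ap z * diagZ n κ z * Am z * (Atm z)⁻¹ := by
      calc Atp z * diagZ n ν z
          = Atp z * diagZ n ν z * Atm z * (Atm z)⁻¹ := by
            rw [Matrix.mul_assoc (Atp z * diagZ n ν z), Matrix.mul_nonsing_inv _ hAtmdet,
              Matrix.mul_one]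
        _ = Ap z * diagZ n κ z * Am z * (Atm z)⁻¹ := by rw [← heq z hz]
    have hDν : diagZ n ν z * diagZ n (fun i => -ν i) z = 1 := by
      rw [diagZ, diagZ, Matrix.diagonal_mul_diagonal]
      have : (fun i => z ^ ν i * z ^ (-ν i)) = fun _ : Fin n => (1 : ℂ) := by
        funext i; rw [← zpow_add₀ hz0]; simp
      rw [this, Matrix.diagonal_one]
    calc F z = (Ap z)⁻¹ * (Atp z * (diagZ n ν z * diagZ n (fun i => -ν i) z)) := by
          rw [hDν, Matrix.mul_one]
      _ = (Ap z)⁻¹ * (Atp z * diagZ n ν z * diagZ n (fun i => -ν i) z) := by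
          rw [Matrix.mul_assoc (Atp z)]
      _ = (Ap z)⁻¹ * (Ap z * diagZ n κ z * Am z * (Atm z)⁻¹ * diagZ n (fun i => -ν i) z) := by
          rw [h2]
      _ = diagZ n κ z * Bm z * diagZ n (fun i => -ν i) z := by
          rw [hBm]
          rw [show Ap z * diagZ n κ z * Am z * (Atm z)⁻¹ * diagZ n (fun i => -ν i) z
            = Ap z * (diagZ n κ z * (Am z * (Atm z)⁻¹) * diagZ n (fun i => -ν i) z) by
              simp only [Matrix.mul_assoc]]
          rw [← Matrix.mul_assoc ((Ap z)⁻¹), Matrix.nonsing_inv_mul _ hApdet, Matrix.one_mul]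
  -- entrywise data
  have hentry : ∀ k j : Fin n, ∃ p : Polynomial ℂ,
      ((∀ m : ℕ, (κ k - ν j) < (m : ℤ) → p.coeff m = 0) ∧
       (∀ z ∈ closedBall (0:ℂ) 1, F z k j = p.eval z)) ∧
      (∀ z : ℂ, 1 ≤ ‖z‖ → p.eval z = z ^ κ k * Bm z k j * z ^ (-ν j)) := by
    intro k j
    obtain ⟨M, hM0, hMb⟩ := bounded_of_tendsto (hBmc k j) (hBml k j)
    set g : ℂ → ℂ := fun z => z ^ κ k * Bm z k j * z ^ (-ν j) with hg
    have hgc : ContinuousOn g {z : ℂ | 1 ≤ ‖z‖} := by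
      apply ContinuousOn.mul
      apply ContinuousOn.mul
      · intro z hz
        exact (continuousAt_zpow₀ _ _ (Or.inl (hne0 z hz))).continuousWithinAt
      · exact hBmc k j
      · intro z hz
        exact (continuousAt_zpow₀ _ _ (Or.inl (hne0 z hz))).continuousWithinAt
    have hgd : DifferentiableOn ℂ g {z : ℂ | 1 < ‖z‖} := by
      apply DifferentiableOn.mul
      apply DifferentiableOn.mul
      · intro z hz
        exact ((differentiableAt_zpow).mpr (Or.inl (hne0 z (le_of_lt hz)))).differentiableWithinAt
      · exact hBmd k j
      · intro z hz
        exact ((differentiableAt_zpow).mpr (Or.inl (hne0 z (le_of_lt hz)))).differentiableWithinAt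
    have hgb : ∀ z : ℂ, 1 ≤ ‖z‖ → ‖g z‖ ≤ M * ‖z‖ ^ (κ k - ν j) := by
      intro z hz
      have hzn0 : ‖z‖ ≠ 0 := by positivity
      rw [hg]
      simp only [norm_mul, norm_zpow]
      calc ‖z‖ ^ κ k * ‖Bm z k j‖ * ‖z‖ ^ (-ν j)
          ≤ ‖z‖ ^ κ k * M * ‖z‖ ^ (-ν j) := by
            apply mul_le_mul_of_nonneg_right _ (by positivity)
            exact mul_le_mul_of_nonneg_left (hMb z hz) (by positivity)
        _ = M * ‖z‖ ^ (κ k - ν j) := by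
            rw [show κ k - ν j = κ k + (-ν j) by ring, zpow_add₀ hzn0]
            ring
    have hcircle : ∀ z : ℂ, ‖z‖ = 1 → F z k j = g z := by
      intro z hz
      rw [hcirc z hz, hg]
      rw [diagZ, diagZ, diag_entry]
    obtain ⟨p, hp1, hp2⟩ := coeff_vanish (hFc k j) (hFd k j) hgc hgd hgb hcircle
    refine ⟨p, ⟨hp1, fun z hz => (hp2 z hz).symm ▸ rfl⟩, ?_⟩
    · -- exterior identity via maximum modulus
      set d : ℤ := κ k - ν j with hd
      set D : ℤ := max d 0 with hD
      have hD0 : 0 ≤ D := le_max_right _ _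
      have hDd : d ≤ D := le_max_left _ _
      have hDnat : ((D.toNat : ℤ)) = D := Int.toNat_of_nonneg hD0
      have hdeg : p.natDegree ≤ D.toNat := by
        rw [Polynomial.natDegree_le_iff_coeff_eq_zero]
        intro m hm
        apply hp1
        omega
      set S : ℝ := ∑ m ∈ Finset.range (D.toNat + 1), ‖p.coeff m‖ with hS
      set gg : ℂ → ℂ := fun z => z ^ (-D) * (p.eval z - g z) with hgg
      have hggc : ContinuousOn gg {z : ℂ | 1 ≤ ‖z‖} := by
        apply ContinuousOn.mul
        · intro z hz
          exact (continuousAt_zpow₀ _ _ (Or.inl (hne0 z hz))).continuousWithinAt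
        · exact ((p.continuous_aeval).continuousOn).sub hgc
      have hggd : DifferentiableOn ℂ gg {z : ℂ | 1 < ‖z‖} := by
        apply DifferentiableOn.mul
        · intro z hz
          exact ((differentiableAt_zpow).mpr (Or.inl (hne0 z (le_of_lt hz)))).differentiableWithinAt
        · exact ((p.differentiable_aeval).differentiableOn).sub hgd
      have hggb : ∀ z : ℂ, 1 ≤ ‖z‖ → ‖gg z‖ ≤ S + M := by
        intro z hz
        have hzn0 : ‖z‖ ≠ 0 := by positivity
        have hzn1 : (1:ℝ) ≤ ‖z‖ := hz
        have hev : p.eval z = ∑ m ∈ Finset.range (D.toNat + 1), p.coeff m * z ^ m :=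
          Polynomial.eval_eq_sum_range' (Nat.lt_succ_of_le hdeg) z
        have hple : ‖z ^ (-D) * p.eval z‖ ≤ S := by
          rw [hev, Finset.mul_sum, hS]
          refine le_trans (norm_sum_le _ _) (Finset.sum_le_sum ?_)
          intro m hm
          rw [Finset.mem_range] at hm
          rw [norm_mul, norm_mul, norm_zpow, norm_pow]
          have h1 : ‖z‖ ^ m * ‖z‖ ^ (-D) = ‖z‖ ^ ((m : ℤ) - D) := by
            rw [← zpow_natCast ‖z‖ m, ← zpow_add₀ hzn0]
            try congr 1
            try ring
          rw [mul_comm (‖z‖ ^ (-D)), mul_assoc, h1]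
          have h2 : ‖z‖ ^ ((m : ℤ) - D) ≤ 1 := by
            apply zpow_le_one_of_nonpos₀ hzn1
            omega
          calc ‖p.coeff m‖ * ‖z‖ ^ ((m : ℤ) - D) ≤ ‖p.coeff m‖ * 1 :=
                mul_le_mul_of_nonneg_left h2 (norm_nonneg _)
            _ = ‖p.coeff m‖ := mul_one _
        have hgle : ‖z ^ (-D) * g z‖ ≤ M := by
          rw [norm_mul, norm_zpow]
          calc ‖z‖ ^ (-D) * ‖g z‖ ≤ ‖z‖ ^ (-D) * (M * ‖z‖ ^ d) :=
                mul_le_mul_of_nonneg_left (hgb z hz) (by positivity)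
            _ = M * ‖z‖ ^ (d - D) := by
                rw [show d - D = -D + d by ring, zpow_add₀ hzn0]; ring
            _ ≤ M * 1 := by
                apply mul_le_mul_of_nonneg_left _ hM0
                apply zpow_le_one_of_nonpos₀ hzn1
                omega
            _ = M := mul_one M
        calc ‖gg z‖ = ‖z ^ (-D) * p.eval z - z ^ (-D) * g z‖ := by
              rw [hgg]; ring_nf
          _ ≤ ‖z ^ (-D) * p.eval z‖ + ‖z ^ (-D) * g z‖ := norm_sub_le _ _
          _ ≤ S + M := add_le_add hple hgle
      have hgg0 : ∀ z : ℂ, ‖z‖ = 1 → gg z = 0 := by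
        intro z hz
        have hzc : z ∈ closedBall (0:ℂ) 1 := by simp [mem_closedBall, dist_eq_norm, hz]
        have h0' : p.eval z - g z = 0 := by
          rw [← hp2 z hzc, hcircle z hz, sub_self]
        simp only [hgg]
        rw [h0', mul_zero]
      have := ext_zero hggc hggd hggb hgg0
      intro z hz
      have hzz := this z hz
      rw [hgg] at hzz
      have hz0 : z ≠ 0 := hne0 z hz
      rcases mul_eq_zero.mp hzz with h | h
      · exact absurd h (zpow_ne_zero _ hz0)
      · exact sub_eq_zero.mp h
  choose p hpa hpb using hentry
  have hdisk : ∀ z ∈ closedBall (0:ℂ) 1,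
      (Matrix.of fun k j => (p k j).eval z) = F z := by
    intro z hz
    ext k j
    rw [Matrix.of_apply]
    exact ((hpa k j).2 z hz).symm
  have hext : ∀ z : ℂ, 1 ≤ ‖z‖ → (Matrix.of fun k j => (p k j).eval z)
      = diagZ n κ z * Bm z * diagZ n (fun i => -ν i) z := by
    intro z hz
    ext k j
    rw [Matrix.of_apply, hpb k j z hz, diagZ, diagZ, diag_entry]
  refine ⟨p, fun k j m hm => (hpa k j).1 m hm, ?_, ?_, ?_⟩
  · intro z hz
    rw [hdisk z hz, hF]
    rw [← Matrix.mul_assoc, Matrix.mul_nonsing_inv _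
      ((Matrix.isUnit_iff_isUnit_det _).mp (hApu z hz)), Matrix.one_mul]
  · intro z hz
    rw [hext z hz, hBm]
  · intro z
    rcases le_total ‖z‖ 1 with h | h
    · have hzc : z ∈ closedBall (0:ℂ) 1 := by
        simpa [mem_closedBall, dist_eq_norm] using h
      rw [hdisk z hzc, hF]
      exact (isUnit_nonsing_inv (hApu z hzc)).mul (hAtpu z hzc)
    · rw [hext z h]
      have hz0 : z ≠ 0 := hne0 z h
      have hBu : IsUnit (Bm z) := by
        rw [hBm]
        exact (hAmu z h).mul (isUnit_nonsing_inv (hAtmu z h))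
      exact ((diagZ_isUnit hz0).mul hBu).mul (diagZ_isUnit hz0)


end BirkhoffAux

/-- Uniqueness of partial indices in Birkhoff decompositions, and the precise
relation between two decompositions `A₊ D A₋ = Ã₊ D̃ Ã₋` on the unit circle: the indices
agree and the factors differ by a polynomial matrix `C` with invertible values whose
entries `c_{kj}` vanish if `κ_k < κ_j`, are constant if `κ_k = κ_j`, and are polynomials of
degree at most `κ_k − κ_j` if `κ_k > κ_j`. -/
theorem stmt_2 (n : ℕ)
    (Ap Atp Am Atm : ℂ → Matrix (Fin n) (Fin n) ℂ)
    (Linf Ltinf : Matrix (Fin n) (Fin n) ℂ)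
    (κ ν : Fin n → ℤ) (hκ : Antitone κ) (hν : Antitone ν)
    (hApc : ∀ i j, ContinuousOn (fun z => Ap z i j) (closedBall 0 1))
    (hApd : ∀ i j, DifferentiableOn ℂ (fun z => Ap z i j) (ball 0 1))
    (hApu : ∀ z ∈ closedBall (0 : ℂ) 1, IsUnit (Ap z))
    (hAtpc : ∀ i j, ContinuousOn (fun z => Atp z i j) (closedBall 0 1))
    (hAtpd : ∀ i j, DifferentiableOn ℂ (fun z => Atp z i j) (ball 0 1))
    (hAtpu : ∀ z ∈ closedBall (0 : ℂ) 1, IsUnit (Atp z))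
    (hAmc : ∀ i j, ContinuousOn (fun z => Am z i j) {z : ℂ | 1 ≤ ‖z‖})
    (hAmd : ∀ i j, DifferentiableOn ℂ (fun z => Am z i j) {z : ℂ | 1 < ‖z‖})
    (hAmu : ∀ z : ℂ, 1 ≤ ‖z‖ → IsUnit (Am z))
    (hAml : ∀ i j, Tendsto (fun z => Am z i j)
      (comap (fun z : ℂ => ‖z‖) atTop) (nhds (Linf i j)))
    (hLu : IsUnit Linf)
    (hAtmc : ∀ i j, ContinuousOn (fun z => Atm z i j) {z : ℂ | 1 ≤ ‖z‖})
    (hAtmd : ∀ i j, DifferentiableOn ℂ (fun z => Atm z i j) {z : ℂ | 1 < ‖z‖})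
    (hAtmu : ∀ z : ℂ, 1 ≤ ‖z‖ → IsUnit (Atm z))
    (hAtml : ∀ i j, Tendsto (fun z => Atm z i j)
      (comap (fun z : ℂ => ‖z‖) atTop) (nhds (Ltinf i j)))
    (hLtu : IsUnit Ltinf)
    (heq : ∀ z : ℂ, ‖z‖ = 1 →
      Ap z * diagZ n κ z * Am z = Atp z * diagZ n ν z * Atm z) :
    κ = ν ∧
    ∃ p : Fin n → Fin n → Polynomial ℂ,
      (∀ z : ℂ, IsUnit (Matrix.of fun k j => (p k j).eval z)) ∧
      (∀ z ∈ closedBall (0 : ℂ) 1,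
        Atp z = Ap z * Matrix.of fun k j => (p k j).eval z) ∧
      (∀ z : ℂ, 1 ≤ ‖z‖ → Atm z =
        (diagZ n κ z)⁻¹ * (Matrix.of fun k j => (p k j).eval z)⁻¹ * diagZ n κ z * Am z) ∧
      (∀ k j, κ k < κ j → p k j = 0) ∧
      (∀ k j, κ k = κ j → (p k j).degree ≤ 0) ∧
      (∀ k j, κ j < κ k → (p k j).degree ≤ ((κ k - κ j).toNat : ℕ)) := by
  obtain ⟨p, hp_coeff, hp_disk, hp_ext, hp_unit⟩ :=
    BirkhoffAux.key Ap Atp Am Atm Linf Ltinf κ ν hApc hApd hApu hAtpc hAtpd hAtpu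
      hAmc hAmd hAmu hAml hAtmc hAtmd hAtmu hAtml hLtu heq
  obtain ⟨q, hq_coeff, hq_disk, hq_ext, hq_unit⟩ :=
    BirkhoffAux.key Atp Ap Atm Am Ltinf Linf ν κ hAtpc hAtpd hAtpu hApc hApd hApu
      hAtmc hAtmd hAtmu hAtml hAmc hAmd hAmu hAml hLu (fun z hz => (heq z hz).symm)
  have hκν : κ = ν := by
    by_contra hne
    have hex : ∃ i, κ i ≠ ν i := Function.ne_iff.mp hne
    set Fs : Finset (Fin n) := Finset.univ.filter (fun i : Fin n => κ i ≠ ν i) with hFs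
    have hFne : Fs.Nonempty := by
      obtain ⟨i, hi⟩ := hex
      exact ⟨i, by simp [hFs, hi]⟩
    set r := Fs.min' hFne with hr
    have hrF : r ∈ Fs := Fs.min'_mem hFne
    have hrne : κ r ≠ ν r := by simpa [hFs] using hrF
    rcases lt_or_gt_of_ne hrne with hlt | hgt
    · have hzero : ∀ k j : Fin n, r ≤ k → j ≤ r →
          (Matrix.of fun k j => (p k j).eval (0:ℂ)) k j = 0 := by
        intro k j hk hj
        have h1 : κ k ≤ κ r := hκ hk
        have h2 : ν r ≤ ν j := hν hj
        have hp0 : p k j = 0 := by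
          apply Polynomial.ext
          intro m
          rw [Polynomial.coeff_zero]
          exact hp_coeff k j m (by omega)
        simp [Matrix.of_apply, hp0]
      have hdet := BirkhoffAux.det_zero_block _ r hzero
      have hu := hp_unit 0
      rw [Matrix.isUnit_iff_isUnit_det, hdet] at hu
      exact hu.ne_zero rfl
    · have hzero : ∀ k j : Fin n, r ≤ k → j ≤ r →
          (Matrix.of fun k j => (q k j).eval (0:ℂ)) k j = 0 := by
        intro k j hk hj
        have h1 : ν k ≤ ν r := hν hk
        have h2 : κ r ≤ κ j := hκ hj
        have hq0 : q k j = 0 := by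
          apply Polynomial.ext
          intro m
          rw [Polynomial.coeff_zero]
          exact hq_coeff k j m (by omega)
        simp [Matrix.of_apply, hq0]
      have hdet := BirkhoffAux.det_zero_block _ r hzero
      have hu := hq_unit 0
      rw [Matrix.isUnit_iff_isUnit_det, hdet] at hu
      exact hu.ne_zero rfl
  subst hκν
  refine ⟨rfl, p, hp_unit, hp_disk, ?_, ?_, ?_, ?_⟩
  · intro z hz
    have hz0 : z ≠ 0 := by
      intro hc; rw [hc] at hz; simp at hz; linarith
    set P : Matrix (Fin n) (Fin n) ℂ := Matrix.of fun k j => (p k j).eval z with hP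
    have hPdet : IsUnit P.det := (Matrix.isUnit_iff_isUnit_det P).mp (hp_unit z)
    have hDdet : IsUnit (diagZ n κ z).det :=
      (Matrix.isUnit_iff_isUnit_det _).mp (BirkhoffAux.diagZ_isUnit hz0)
    have hAtmdet : IsUnit (Atm z).det := (Matrix.isUnit_iff_isUnit_det _).mp (hAtmu z hz)
    have hDneg : diagZ n (fun i => -κ i) z * diagZ n κ z = 1 := BirkhoffAux.diagZ_mul_neg hz0
    have hstep : P * (diagZ n κ z * Atm z) = diagZ n κ z * Am z := by
      rw [hP, hp_ext z hz]
      calc diagZ n κ z * (Am z * (Atm z)⁻¹) * diagZ n (fun i => -κ i) z *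
            (diagZ n κ z * Atm z)
          = diagZ n κ z * (Am z * (Atm z)⁻¹) *
            (diagZ n (fun i => -κ i) z * diagZ n κ z) * Atm z := by
            simp only [Matrix.mul_assoc]
        _ = diagZ n κ z * (Am z * ((Atm z)⁻¹ * Atm z)) := by
            rw [hDneg, Matrix.mul_one]
            simp only [Matrix.mul_assoc]
        _ = diagZ n κ z * Am z := by
            rw [Matrix.nonsing_inv_mul _ hAtmdet, Matrix.mul_one]
    have h3 : P⁻¹ * (diagZ n κ z * Am z) = diagZ n κ z * Atm z := by
      rw [← hstep, ← Matrix.mul_assoc, Matrix.nonsing_inv_mul _ hPdet, Matrix.one_mul]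
    calc Atm z = (diagZ n κ z)⁻¹ * (diagZ n κ z * Atm z) := by
          rw [← Matrix.mul_assoc, Matrix.nonsing_inv_mul _ hDdet, Matrix.one_mul]
      _ = (diagZ n κ z)⁻¹ * (P⁻¹ * (diagZ n κ z * Am z)) := by rw [h3]
      _ = (diagZ n κ z)⁻¹ * P⁻¹ * diagZ n κ z * Am z := by
          simp only [Matrix.mul_assoc]
  · intro k j hkj
    apply Polynomial.ext
    intro m
    rw [Polynomial.coeff_zero]
    exact hp_coeff k j m (by omega)
  · intro k j hkj
    rw [Polynomial.degree_le_iff_coeff_zero]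
    intro m hm
    have hm' : (0:ℕ) < m := by exact_mod_cast hm
    exact hp_coeff k j m (by omega)
  · intro k j hkj
    rw [Polynomial.degree_le_iff_coeff_zero]
    intro m hm
    have hm' : (κ k - κ j).toNat < m := by exact_mod_cast hm
    have h2 : ((κ k - κ j).toNat : ℤ) = κ k - κ j := Int.toNat_of_nonneg (by omega)
    exact hp_coeff k j m (by omega)
end

section
/- Let f : 𝕊 → ℂ be continuous. Then: (i) f̂_k = 0 for all k < 0 if and only if f has a continuous extension F : 𝔻̄ → ℂ which is holomorphic on 𝔻; and (ii) f̂_k = 0 for all k ≥ 0 if and only if f has a continuous extension F : {z ∈ ℂ : |z| ≥ 1} → ℂ which is holomorphic on {z : |z| > 1} and satisfies F(z) → 0 as |z| → ∞. -/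
open Metric Filter

/-- The `k`-th Fourier coefficient `∫₀¹ f(e^{2πit}) e^{−2πikt} dt` of a function on the
unit circle (given as a function on `ℂ`, only its values on the circle matter). -/
noncomputable def circleFourierCoeff (f : ℂ → ℂ) (k : ℤ) : ℂ :=
  ∫ t in (0:ℝ)..1,
    f (Complex.exp (2 * (Real.pi : ℂ) * Complex.I * (t : ℂ))) *
      Complex.exp (-(2 * (Real.pi : ℂ) * Complex.I * (k : ℂ) * (t : ℂ)))

set_option maxHeartbeats 1000000
open Metric Filter MeasureTheory intervalIntegral Complex Set

noncomputable def ce (t : ℝ) : ℂ := Complex.exp (2 * (Real.pi : ℂ) * Complex.I * t)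

lemma ce_norm (t : ℝ) : ‖ce t‖ = 1 := by
  simp [ce, Complex.norm_exp]

lemma ce_ne_zero (t : ℝ) : ce t ≠ 0 := Complex.exp_ne_zero _

lemma ce_mem (t : ℝ) : ce t ∈ {z : ℂ | ‖z‖ = 1} := ce_norm t

lemma sphere_eq : {z : ℂ | ‖z‖ = 1} = Metric.sphere (0:ℂ) 1 := by
  ext z; simp [Metric.mem_sphere, dist_zero_right]

lemma ce_eq_exp (t : ℝ) : ce t = Complex.exp ((2 * Real.pi * t : ℝ) * Complex.I) := by
  unfold ce; congr 1; push_cast; ring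

lemma ce_pow (t : ℝ) (n : ℕ) : (ce t) ^ n = Complex.exp (2 * (Real.pi : ℂ) * Complex.I * n * t) := by
  rw [ce, ← Complex.exp_nat_mul]; congr 1; ring

lemma ce_inv (t : ℝ) : (ce t)⁻¹ = ce (-t) := by
  rw [ce, ce, ← Complex.exp_neg]; congr 1; push_cast; ring

lemma ce_one_sub (t : ℝ) : ce (1 - t) = (ce t)⁻¹ := by
  rw [ce_inv, ce, ce]
  rw [show (2 * (Real.pi:ℂ) * Complex.I * ((1 - t : ℝ) : ℂ)) =
      2 * Real.pi * Complex.I + 2 * Real.pi * Complex.I * ((-t : ℝ) : ℂ) by push_cast; ring]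
  rw [Complex.exp_add, Complex.exp_two_pi_mul_I, one_mul]

lemma circleInt_eq (g : ℂ → ℂ) :
    (∮ w in C((0:ℂ), (1:ℝ)), g w) = (2 * Real.pi * Complex.I) * ∫ t in (0:ℝ)..1, ce t * g (ce t) := by
  have hmap : ∀ θ : ℝ, circleMap 0 1 θ = Complex.exp ((θ:ℂ) * Complex.I) := by
    intro θ; simp [circleMap]
  rw [circleIntegral]
  simp_rw [deriv_circleMap, hmap, smul_eq_mul]
  have h2π : (2 * Real.pi : ℝ) ≠ 0 := by positivity
  have := intervalIntegral.integral_comp_mul_left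
    (fun θ : ℝ => Complex.exp ((θ:ℂ) * Complex.I) * Complex.I * g (Complex.exp ((θ:ℂ) * Complex.I)))
    (a := 0) (b := 1) h2π
  simp only [mul_zero, mul_one] at this
  rw [show (∫ θ in (0:ℝ)..(2*Real.pi),
      Complex.exp ((θ:ℂ) * Complex.I) * Complex.I * g (Complex.exp ((θ:ℂ) * Complex.I)))
      = (2*Real.pi:ℝ) • ∫ x in (0:ℝ)..1,
        Complex.exp (((2*Real.pi*x : ℝ):ℂ) * Complex.I) * Complex.I
          * g (Complex.exp (((2*Real.pi*x : ℝ):ℂ) * Complex.I)) by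
    rw [this, smul_inv_smul₀ h2π]]
  simp_rw [← ce_eq_exp]
  simp_rw [show ∀ x : ℝ, ce x * Complex.I * g (ce x) = Complex.I * (ce x * g (ce x)) from
    fun x => by ring]
  rw [intervalIntegral.integral_const_mul, Complex.real_smul]
  push_cast
  ring

lemma two_pi_I_ne : (2 * (Real.pi:ℂ) * Complex.I) ≠ 0 := by
  simp [Real.pi_ne_zero, Complex.I_ne_zero]

lemma integral_ce_pow {n : ℕ} (hn : n ≠ 0) : (∫ t in (0:ℝ)..1, (ce t)^n) = 0 := by
  simp_rw [ce_pow]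
  have hc : (2 * (Real.pi:ℂ) * Complex.I * n) ≠ 0 := by
    simp [Real.pi_ne_zero, Complex.I_ne_zero, hn]
  rw [integral_exp_mul_complex hc]
  have : Complex.exp (2 * (Real.pi:ℂ) * Complex.I * n * (1:ℝ)) = 1 := by
    rw [show (2 * (Real.pi:ℂ) * Complex.I * n * (1:ℝ)) = (n:ℤ) * (2 * Real.pi * Complex.I) by
      push_cast; ring]
    exact Complex.exp_int_mul_two_pi_mul_I n
  rw [this]
  simp

lemma integral_boundary_pow_eq_zero {F : ℂ → ℂ}
    (hc : ContinuousOn F (Metric.closedBall 0 1))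
    (hd : ∀ z ∈ Metric.ball (0:ℂ) 1 \ {0}, DifferentiableAt ℂ F z) (n : ℕ) :
    (∫ t in (0:ℝ)..1, F (ce t) * (ce t)^(n+1)) = 0 := by
  have hG : (∮ w in C((0:ℂ), (1:ℝ)), F w * w ^ n) = 0 := by
    apply Complex.circleIntegral_eq_zero_of_differentiable_on_off_countable
      (zero_le_one) (Set.countable_singleton (0:ℂ))
    · exact hc.mul ((continuous_pow n).continuousOn)
    · intro z hz
      exact (hd z hz).mul ((differentiable_pow n).differentiableAt)
  rw [circleInt_eq] at hG
  rcases mul_eq_zero.1 hG with h | h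
  · exact absurd h two_pi_I_ne
  · rw [← h]
    congr 1
    funext t
    ring

lemma integral_boundary_eq_center {F : ℂ → ℂ}
    (hc : ContinuousOn F (Metric.closedBall 0 1))
    (hd : ∀ z ∈ Metric.ball (0:ℂ) 1 \ {0}, DifferentiableAt ℂ F z) :
    (∫ t in (0:ℝ)..1, F (ce t)) = F 0 := by
  have h := Complex.circleIntegral_sub_inv_smul_of_differentiable_on_off_countable
    (Set.countable_singleton (0:ℂ)) (Metric.mem_ball_self one_pos) hc hd
  rw [circleInt_eq] at h
  simp only [smul_eq_mul, sub_zero] at h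
  have h2 : (2 * (Real.pi:ℂ) * Complex.I) * (∫ t in (0:ℝ)..1, F (ce t))
      = (2 * (Real.pi:ℂ) * Complex.I) * F 0 := by
    rw [← h]
    congr 1
    apply intervalIntegral.integral_congr
    intro t _
    field_simp [ce_ne_zero t]
  exact mul_left_cancel₀ two_pi_I_ne h2
lemma poisson_split {z w : ℂ} (hw : ‖w‖ = 1) (hz : ‖z‖ < 1) :
    (((1 - ‖z‖^2) / ‖w - z‖^2 : ℝ) : ℂ)
      = w / (w - z) + (starRingEnd ℂ) z * w / (1 - (starRingEnd ℂ) z * w) := by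
  have hw0 : w ≠ 0 := by
    intro h; rw [h] at hw; simp at hw
  have hwz : w - z ≠ 0 := by
    intro h
    rw [sub_eq_zero] at h
    rw [← h, hw] at hz
    exact lt_irrefl _ hz
  have h1 : (1 : ℂ) - (starRingEnd ℂ) z * w ≠ 0 := by
    intro h
    rw [sub_eq_zero] at h
    have h2 : (1:ℝ) = ‖(starRingEnd ℂ) z * w‖ := by rw [← h]; simp
    rw [norm_mul, RCLike.norm_conj, hw, mul_one] at h2
    rw [← h2] at hz
    exact lt_irrefl _ hz
  have hww : w * (starRingEnd ℂ) w = 1 := by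
    rw [Complex.mul_conj]
    rw [Complex.normSq_eq_norm_sq, hw]
    norm_num
  have hcw : (starRingEnd ℂ) w = w⁻¹ := by
    field_simp [hw0]
    linear_combination hww
  have e1 : ((‖z‖^2 : ℝ) : ℂ) = z * (starRingEnd ℂ) z := by
    rw [Complex.mul_conj, Complex.normSq_eq_norm_sq]
  have e2 : ((‖w - z‖^2 : ℝ) : ℂ) = (w - z) * ((starRingEnd ℂ) w - (starRingEnd ℂ) z) := by
    rw [show (starRingEnd ℂ) w - (starRingEnd ℂ) z = (starRingEnd ℂ) (w - z) by rw [map_sub]]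
    rw [Complex.mul_conj, Complex.normSq_eq_norm_sq]
  have hwz2 : ((‖w - z‖^2 : ℝ) : ℂ) ≠ 0 := by
    rw [e2]
    exact mul_ne_zero hwz (by rw [← map_sub]; simpa using (map_ne_zero (starRingEnd ℂ)).mpr hwz)
  have hne : w⁻¹ - (starRingEnd ℂ) z ≠ 0 := by
    rw [← hcw, ← map_sub]
    simpa using (map_ne_zero (starRingEnd ℂ)).mpr hwz
  have hwz2c : (w - z) * ((starRingEnd ℂ) w - (starRingEnd ℂ) z) ≠ 0 := by
    rw [← e2]; exact hwz2
  have hden : (w - z) * (1 - (starRingEnd ℂ) z * w) ≠ 0 := mul_ne_zero hwz h1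
  rw [Complex.ofReal_div, Complex.ofReal_sub, Complex.ofReal_one, e1, e2,
    div_add_div _ _ hwz h1, div_eq_div_iff hwz2c hden]
  linear_combination (-((1 - z * (starRingEnd ℂ) z) * (w - z))) * hww
lemma ce_continuous : Continuous ce := by
  unfold ce
  exact Complex.continuous_exp.comp (continuous_const.mul Complex.continuous_ofReal)
lemma tail_zero {φ : ℝ → ℂ} (hφ : Continuous φ) {M : ℝ} (hM : ∀ t, ‖φ t‖ ≤ M)
    {z : ℂ} (hz : ‖z‖ < 1)
    (h0 : ∀ n : ℕ, (∫ t in (0:ℝ)..1, φ t * (ce t)^(n+1)) = 0) :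
    (∫ t in (0:ℝ)..1, φ t * (z * ce t / (1 - z * ce t))) = 0 := by
  have hzt : ∀ t : ℝ, ‖z * ce t‖ < 1 := by
    intro t; rw [norm_mul, ce_norm, mul_one]; exact hz
  have hpt : ∀ t : ℝ, φ t * (z * ce t / (1 - z * ce t))
      = ∑' n : ℕ, φ t * z^(n+1) * (ce t)^(n+1) := by
    intro t
    have hgeo : ∑' n : ℕ, (z * ce t)^n = (1 - z * ce t)⁻¹ :=
      tsum_geometric_of_norm_lt_one (hzt t)
    have h2 : ∑' n : ℕ, (z * ce t)^(n+1) = z * ce t / (1 - z * ce t) := by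
      simp_rw [pow_succ']
      rw [tsum_mul_left, hgeo, div_eq_mul_inv]
    rw [← h2, ← tsum_mul_left]
    congr 1; funext n
    rw [mul_pow]; ring
  simp_rw [hpt]
  rw [intervalIntegral.integral_of_le zero_le_one]
  have hFi : ∀ n : ℕ, IntegrableOn (fun t => φ t * z^(n+1) * (ce t)^(n+1)) (Ioc (0:ℝ) 1) := by
    intro n
    exact ((hφ.mul continuous_const).mul ((ce_continuous).pow (n+1))).integrableOn_Ioc
  have hsum : Summable (fun n : ℕ => ∫ t in Ioc (0:ℝ) 1, ‖φ t * z^(n+1) * (ce t)^(n+1)‖) := by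
    have hle : ∀ n : ℕ, (∫ t in Ioc (0:ℝ) 1, ‖φ t * z^(n+1) * (ce t)^(n+1)‖)
        ≤ (M * ‖z‖) * ‖z‖^n := by
      intro n
      have : ∀ t : ℝ, ‖φ t * z^(n+1) * (ce t)^(n+1)‖ ≤ (M * ‖z‖) * ‖z‖^n := by
        intro t
        rw [norm_mul, norm_mul, norm_pow, norm_pow, ce_norm, one_pow, mul_one]
        calc ‖φ t‖ * ‖z‖^(n+1) ≤ M * ‖z‖^(n+1) := by
              apply mul_le_mul_of_nonneg_right (hM t) (by positivity)
          _ = (M * ‖z‖) * ‖z‖^n := by ring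
      calc (∫ t in Ioc (0:ℝ) 1, ‖φ t * z^(n+1) * (ce t)^(n+1)‖)
          ≤ ∫ _t in Ioc (0:ℝ) 1, (M * ‖z‖) * ‖z‖^n := by
            apply MeasureTheory.integral_mono_of_nonneg
            · filter_upwards with t using norm_nonneg _
            · exact integrable_const _
            · filter_upwards with t using this t
        _ = (M * ‖z‖) * ‖z‖^n := by
            simp [Real.volume_Ioc]
    apply Summable.of_nonneg_of_le (fun n => integral_nonneg (fun t => norm_nonneg _)) hle
    exact (summable_geometric_of_lt_one (norm_nonneg z) hz).mul_left _
  rw [← MeasureTheory.integral_tsum_of_summable_integral_norm hFi hsum]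
  have hzero : ∀ n : ℕ, (∫ t in Ioc (0:ℝ) 1, φ t * z^(n+1) * (ce t)^(n+1)) = 0 := by
    intro n
    rw [← intervalIntegral.integral_of_le zero_le_one]
    calc (∫ t in (0:ℝ)..1, φ t * z^(n+1) * (ce t)^(n+1))
        = z^(n+1) * ∫ t in (0:ℝ)..1, φ t * (ce t)^(n+1) := by
          rw [← intervalIntegral.integral_const_mul]
          congr 1; funext t; ring
      _ = 0 := by rw [h0 n, mul_zero]
  simp_rw [hzero]
  exact tsum_zero

noncomputable def poissonKer (z w : ℂ) : ℝ := (1 - ‖z‖^2) / ‖w - z‖^2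

lemma ce_sub_ne {z : ℂ} (hz : ‖z‖ < 1) (t : ℝ) : ce t - z ≠ 0 := by
  intro h
  rw [sub_eq_zero] at h
  rw [← h, ce_norm] at hz
  exact lt_irrefl _ hz

lemma one_sub_conj_ne {z : ℂ} (hz : ‖z‖ < 1) (t : ℝ) :
    (1:ℂ) - (starRingEnd ℂ) z * ce t ≠ 0 := by
  intro h
  rw [sub_eq_zero] at h
  have h2 : (1:ℝ) = ‖(starRingEnd ℂ) z * ce t‖ := by rw [← h]; simp
  rw [norm_mul, RCLike.norm_conj, ce_norm, mul_one] at h2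
  rw [← h2] at hz
  exact lt_irrefl _ hz

lemma contA {z : ℂ} (hz : ‖z‖ < 1) : Continuous (fun t => ce t / (ce t - z)) :=
  ce_continuous.div (ce_continuous.sub continuous_const) (fun t => ce_sub_ne hz t)

lemma contB {z : ℂ} (hz : ‖z‖ < 1) :
    Continuous (fun t => (starRingEnd ℂ) z * ce t / (1 - (starRingEnd ℂ) z * ce t)) :=
  (continuous_const.mul ce_continuous).div
    (continuous_const.sub (continuous_const.mul ce_continuous)) (fun t => one_sub_conj_ne hz t)

lemma conj_norm_lt {z : ℂ} (hz : ‖z‖ < 1) : ‖(starRingEnd ℂ) z‖ < 1 := by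
  rwa [RCLike.norm_conj]

lemma first_piece {z : ℂ} (hz : ‖z‖ < 1) : (∫ t in (0:ℝ)..1, ce t / (ce t - z)) = 1 := by
  have h := circleIntegral.integral_sub_inv_of_mem_ball
    (show z ∈ Metric.ball (0:ℂ) 1 by simpa [Metric.mem_ball, dist_zero_right] using hz)
  rw [circleInt_eq (fun w => (w - z)⁻¹)] at h
  have h2 : (2 * (Real.pi:ℂ) * Complex.I) * (∫ t in (0:ℝ)..1, ce t * (ce t - z)⁻¹)
      = (2 * (Real.pi:ℂ) * Complex.I) * 1 := by rw [h, mul_one]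
  have h3 := mul_left_cancel₀ two_pi_I_ne h2
  simp_rw [div_eq_mul_inv]
  exact h3

lemma second_piece {f : ℂ → ℂ} {z : ℂ} (hz : ‖z‖ < 1)
    (hφ : Continuous (fun t => f (ce t))) {M : ℝ} (hM : ∀ t, ‖f (ce t)‖ ≤ M)
    (h0 : ∀ n : ℕ, (∫ t in (0:ℝ)..1, f (ce t) * (ce t)^(n+1)) = 0) :
    (∫ t in (0:ℝ)..1, f (ce t) * ((starRingEnd ℂ) z * ce t / (1 - (starRingEnd ℂ) z * ce t)))
      = 0 :=
  tail_zero hφ hM (conj_norm_lt hz) h0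

lemma poisson_decomp {f : ℂ → ℂ} {z : ℂ} (hz : ‖z‖ < 1)
    (hφ : Continuous (fun t => f (ce t))) {M : ℝ} (hM : ∀ t, ‖f (ce t)‖ ≤ M)
    (h0 : ∀ n : ℕ, (∫ t in (0:ℝ)..1, f (ce t) * (ce t)^(n+1)) = 0) :
    (∫ t in (0:ℝ)..1, f (ce t) * ((poissonKer z (ce t) : ℝ) : ℂ))
      = ∫ t in (0:ℝ)..1, f (ce t) * (ce t / (ce t - z)) := by
  have hsplit : (∫ t in (0:ℝ)..1, f (ce t) * ((poissonKer z (ce t) : ℝ) : ℂ))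
      = (∫ t in (0:ℝ)..1, f (ce t) * (ce t / (ce t - z)))
        + ∫ t in (0:ℝ)..1,
            f (ce t) * ((starRingEnd ℂ) z * ce t / (1 - (starRingEnd ℂ) z * ce t)) := by
    rw [← intervalIntegral.integral_add (f := fun t => f (ce t) * (ce t / (ce t - z)))
      (g := fun t => f (ce t) * ((starRingEnd ℂ) z * ce t / (1 - (starRingEnd ℂ) z * ce t))) ((hφ.mul (contA hz)).intervalIntegrable _ _)
      ((hφ.mul (contB hz)).intervalIntegrable _ _)]
    apply intervalIntegral.integral_congr
    intro t _
    simp only [poissonKer]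
    rw [poisson_split (ce_norm t) hz]
    ring
  rw [hsplit, second_piece hz hφ hM h0, add_zero]

lemma poisson_mass {z : ℂ} (hz : ‖z‖ < 1) :
    (∫ t in (0:ℝ)..1, poissonKer z (ce t)) = 1 := by
  have h0 : ∀ n : ℕ, (∫ t in (0:ℝ)..1, (fun (_ : ℂ) => (1:ℂ)) (ce t) * (ce t)^(n+1)) = 0 := by
    intro n
    simp only [one_mul]
    exact integral_ce_pow (Nat.succ_ne_zero n)
  have hC := poisson_decomp (f := fun _ => (1:ℂ)) hz continuous_const
    (M := 1) (fun t => by norm_num) h0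
  simp only [one_mul] at hC
  rw [first_piece hz] at hC
  rw [intervalIntegral.integral_ofReal] at hC
  exact_mod_cast hC

lemma poissonKer_nonneg {z : ℂ} (hz : ‖z‖ ≤ 1) (w : ℂ) : 0 ≤ poissonKer z w := by
  apply div_nonneg
  · nlinarith [norm_nonneg z]
  · positivity

lemma poissonKer_cont {y : ℂ} (hy : ‖y‖ < 1) : Continuous (fun t => poissonKer y (ce t)) := by
  unfold poissonKer
  apply continuous_const.div (((ce_continuous.sub continuous_const).norm).pow 2)
  intro t
  exact pow_ne_zero 2 (norm_ne_zero_iff.2 (ce_sub_ne hy t))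

lemma poissonKer_far_bound {y z₀ w : ℂ} (hy : ‖y‖ ≤ 1) (hz₀ : ‖z₀‖ = 1) {δ : ℝ}
    (hδ : 0 < δ) (hfar : δ ≤ ‖w - z₀‖) (hnear : ‖y - z₀‖ ≤ δ/2) :
    poissonKer y w ≤ 8 * ‖y - z₀‖ / δ^2 := by
  have ht : ‖w - z₀‖ ≤ ‖w - y‖ + ‖y - z₀‖ := by
    calc ‖w - z₀‖ = ‖(w - y) + (y - z₀)‖ := by ring_nf
      _ ≤ ‖w - y‖ + ‖y - z₀‖ := norm_add_le _ _
  have hwy : δ/2 ≤ ‖w - y‖ := by linarith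
  have h1 : 1 - ‖y‖ ≤ ‖y - z₀‖ := by
    have : ‖z₀‖ ≤ ‖z₀ - y‖ + ‖y‖ := by
      calc ‖z₀‖ = ‖(z₀ - y) + y‖ := by ring_nf
        _ ≤ ‖z₀ - y‖ + ‖y‖ := norm_add_le _ _
    rw [hz₀, norm_sub_rev] at this
    linarith
  have hwy2 : (δ/2)^2 ≤ ‖w - y‖^2 := by nlinarith
  rw [poissonKer, div_le_div_iff₀ (by nlinarith) (by positivity)]
  have q : 1 - ‖y‖^2 ≤ 2*‖y - z₀‖ := by
    nlinarith [norm_nonneg y, norm_nonneg (y - z₀),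
      mul_le_mul_of_nonneg_left h1 (show (0:ℝ) ≤ 1 + ‖y‖ by positivity)]
  have p1 : (1 - ‖y‖^2) * δ^2 ≤ 2*‖y - z₀‖ * δ^2 :=
    mul_le_mul_of_nonneg_right q (sq_nonneg δ)
  have p2 : 2*‖y - z₀‖ * δ^2 ≤ 8 * ‖y - z₀‖ * ‖w - y‖^2 := by
    nlinarith [norm_nonneg (y - z₀)]
  linarith

open Classical in
noncomputable def poissonExt (f : ℂ → ℂ) (z : ℂ) : ℂ :=
  if ‖z‖ < 1 then ∫ t in (0:ℝ)..1, f (ce t) * ((poissonKer z (ce t) : ℝ) : ℂ) else f z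

lemma poissonExt_of_lt {f : ℂ → ℂ} {z : ℂ} (hz : ‖z‖ < 1) :
    poissonExt f z = ∫ t in (0:ℝ)..1, f (ce t) * ((poissonKer z (ce t) : ℝ) : ℂ) := if_pos hz

lemma poissonExt_of_eq {f : ℂ → ℂ} {z : ℂ} (hz : ‖z‖ = 1) : poissonExt f z = f z :=
  if_neg (by rw [hz]; exact lt_irrefl 1)

lemma build {f : ℂ → ℂ} (hf : ContinuousOn f {z : ℂ | ‖z‖ = 1})
    (h0 : ∀ n : ℕ, (∫ t in (0:ℝ)..1, f (ce t) * (ce t)^(n+1)) = 0) :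
    ContinuousOn (poissonExt f) (closedBall 0 1) ∧
      DifferentiableOn ℂ (poissonExt f) (ball 0 1) ∧
      Set.EqOn (poissonExt f) f {z : ℂ | ‖z‖ = 1} ∧
      poissonExt f 0 = ∫ t in (0:ℝ)..1, f (ce t) := by
  have hφ : Continuous (fun t => f (ce t)) :=
    hf.comp_continuous ce_continuous (fun t => ce_mem t)
  obtain ⟨M₀, hM₀⟩ := (isCompact_sphere (0:ℂ) 1).exists_bound_of_continuousOn
    (sphere_eq ▸ hf)
  set M := max M₀ 0 with hMdef
  have hM0 : 0 ≤ M := le_max_right _ _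
  have hM : ∀ t : ℝ, ‖f (ce t)‖ ≤ M := by
    intro t
    refine le_trans (hM₀ _ ?_) (le_max_left _ _)
    rw [mem_sphere_iff_norm, sub_zero]; exact ce_norm t
  have hMc : ∀ w : ℂ, ‖w‖ = 1 → ‖f w‖ ≤ M := by
    intro w hw
    refine le_trans (hM₀ _ ?_) (le_max_left _ _)
    rw [mem_sphere_iff_norm, sub_zero]; exact hw
  -- Cauchy integral representation on the ball
  have hrep : ∀ z ∈ ball (0:ℂ) 1, poissonExt f z
      = (2 * (Real.pi:ℂ) * Complex.I)⁻¹ • ∮ w in C((0:ℂ), (1:ℝ)), (w - z)⁻¹ • f w := by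
    intro z hz
    rw [mem_ball_zero_iff] at hz
    rw [poissonExt_of_lt hz, poisson_decomp hz hφ hM h0]
    rw [circleInt_eq (fun w => (w - z)⁻¹ • f w)]
    rw [smul_eq_mul, ← mul_assoc, inv_mul_cancel₀ two_pi_I_ne, one_mul]
    apply intervalIntegral.integral_congr
    intro t _
    simp only [smul_eq_mul]
    field_simp
  have hci : CircleIntegrable f 0 1 :=
    ContinuousOn.circleIntegrable zero_le_one (sphere_eq ▸ hf)
  have hps := hasFPowerSeriesOn_cauchy_integral (R := (1:NNReal)) hci one_pos
  have hdiff0 := hps.differentiableOn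
  rw [Metric.emetric_ball_nnreal] at hdiff0
  have hdiff : DifferentiableOn ℂ (poissonExt f) (ball 0 1) := by
    apply hdiff0.congr
    intro z hz
    push_cast at hz ⊢
    exact hrep z hz
  have heq : Set.EqOn (poissonExt f) f {z : ℂ | ‖z‖ = 1} := fun z hz => poissonExt_of_eq hz
  refine ⟨?_, hdiff, heq, ?_⟩
  · -- continuity on the closed ball
    intro z hz
    rw [mem_closedBall_zero_iff] at hz
    rcases lt_or_eq_of_le hz with hlt | heq1
    · exact ((hdiff.differentiableAt (isOpen_ball.mem_nhds
        (mem_ball_zero_iff.mpr hlt))).continuousAt).continuousWithinAt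
    · -- boundary point
      rw [Metric.continuousWithinAt_iff]
      intro ε hε
      have hfc := hf z heq1
      rw [Metric.continuousWithinAt_iff] at hfc
      obtain ⟨δ, hδ0, hδ⟩ := hfc (ε/3) (by positivity)
      refine ⟨min (δ/2) ((ε/3) * δ^2 / (16*M + 1)), lt_min (by positivity) (by positivity), ?_⟩
      intro y hy hdy
      rw [mem_closedBall_zero_iff] at hy
      rw [dist_eq_norm] at hdy
      have hyz2 : ‖y - z‖ ≤ δ/2 := le_of_lt (lt_of_lt_of_le hdy (min_le_left _ _))
      have hyz3 : ‖y - z‖ ≤ (ε/3) * δ^2 / (16*M + 1) :=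
        le_of_lt (lt_of_lt_of_le hdy (min_le_right _ _))
      have hFz : poissonExt f z = f z := poissonExt_of_eq heq1
      rcases lt_or_eq_of_le hy with hylt | hyeq
      · -- interior point near the boundary
        rw [dist_eq_norm, hFz, poissonExt_of_lt hylt]
        have hPc := poissonKer_cont hylt
        have hPc' : Continuous (fun t => ((poissonKer y (ce t) : ℝ) : ℂ)) :=
          Complex.continuous_ofReal.comp hPc
        have hmass := poisson_mass hylt
        have hconst : (∫ t in (0:ℝ)..1, f z * ((poissonKer y (ce t) : ℝ) : ℂ)) = f z := by
          rw [intervalIntegral.integral_const_mul, intervalIntegral.integral_ofReal, hmass]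
          simp
        have hsub : (∫ t in (0:ℝ)..1, f (ce t) * ((poissonKer y (ce t) : ℝ) : ℂ)) - f z
            = ∫ t in (0:ℝ)..1, (f (ce t) - f z) * ((poissonKer y (ce t) : ℝ) : ℂ) := by
          conv_lhs => rw [← hconst]
          rw [← intervalIntegral.integral_sub (f := fun t => f (ce t) * ((poissonKer y (ce t) : ℝ) : ℂ))
              (g := fun t => f z * ((poissonKer y (ce t) : ℝ) : ℂ)) ((hφ.mul hPc').intervalIntegrable _ _)
              ((continuous_const.mul hPc').intervalIntegrable _ _)]
          apply intervalIntegral.integral_congr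
          intro t _
          simp only
          ring
        rw [hsub]
        have hpt : ∀ t : ℝ, ‖(f (ce t) - f z) * ((poissonKer y (ce t) : ℝ) : ℂ)‖
            ≤ (ε/3) * poissonKer y (ce t) + (2*M) * (8 * ‖y - z‖ / δ^2) := by
          intro t
          have hnn := poissonKer_nonneg hylt.le (ce t)
          rw [norm_mul, Complex.norm_real, Real.norm_of_nonneg hnn]
          by_cases hc : dist (ce t) z < δ
          · have h1 := hδ (ce_mem t) hc
            rw [dist_eq_norm] at h1
            have h2 := mul_le_mul_of_nonneg_right (le_of_lt h1) hnn
            have h3 : (0:ℝ) ≤ (2*M) * (8 * ‖y - z‖ / δ^2) := by positivity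
            linarith
          · push_neg at hc
            rw [dist_eq_norm] at hc
            have hfar := poissonKer_far_bound hylt.le heq1 hδ0 hc hyz2
            have hbb : ‖f (ce t) - f z‖ ≤ 2*M := by
              calc ‖f (ce t) - f z‖ ≤ ‖f (ce t)‖ + ‖f z‖ := norm_sub_le _ _
                _ ≤ M + M := add_le_add (hM t) (hMc z heq1)
                _ = 2*M := by ring
            have h4 := mul_le_mul hbb hfar hnn (by positivity)
            have h5 : (0:ℝ) ≤ (ε/3) * poissonKer y (ce t) :=
              mul_nonneg (by positivity) hnn
            linarith
        calc ‖∫ t in (0:ℝ)..1, (f (ce t) - f z) * ((poissonKer y (ce t) : ℝ) : ℂ)‖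
            ≤ ∫ t in (0:ℝ)..1, ‖(f (ce t) - f z) * ((poissonKer y (ce t) : ℝ) : ℂ)‖ :=
              intervalIntegral.norm_integral_le_integral_norm zero_le_one
          _ ≤ ∫ t in (0:ℝ)..1, ((ε/3) * poissonKer y (ce t) + (2*M) * (8 * ‖y - z‖ / δ^2)) := by
              apply intervalIntegral.integral_mono_on zero_le_one
              · exact (((hφ.sub continuous_const).mul hPc').norm).intervalIntegrable _ _
              · exact ((continuous_const.mul hPc).add continuous_const).intervalIntegrable _ _
              · intro t _; exact hpt t
          _ = (ε/3) + (2*M) * (8 * ‖y - z‖ / δ^2) := by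
              rw [intervalIntegral.integral_add (f := fun t => (ε/3) * poissonKer y (ce t))
                (g := fun _ => (2*M) * (8 * ‖y - z‖ / δ^2)) ((continuous_const.mul hPc).intervalIntegrable _ _)
                (continuous_const.intervalIntegrable _ _),
                intervalIntegral.integral_const_mul, hmass, mul_one,
                intervalIntegral.integral_const]
              simp
          _ < ε := by
              have hA : ‖y - z‖ * (16*M + 1) ≤ (ε/3) * δ^2 := by
                rw [← le_div_iff₀ (by positivity)]
                exact hyz3
              have hB : (2*M) * (8 * ‖y - z‖ / δ^2) ≤ ε/3 := by
                rw [show (2*M) * (8 * ‖y - z‖ / δ^2) = (16*M*‖y - z‖) / δ^2 by ring,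
                  div_le_iff₀ (by positivity : (0:ℝ) < δ^2)]
                nlinarith [norm_nonneg (y - z), hM0, hA]
              linarith
      · have hd2 : dist y z < δ := by
          rw [dist_eq_norm]
          linarith [hyz2]
        calc dist (poissonExt f y) (poissonExt f z) = dist (f y) (f z) := by
              rw [hFz, poissonExt_of_eq hyeq]
          _ < ε/3 := hδ hyeq hd2
          _ < ε := by linarith
  · rw [poissonExt_of_lt (by simp)]
    apply intervalIntegral.integral_congr
    intro t _
    simp only
    have hk : poissonKer 0 (ce t) = 1 := by
      unfold poissonKer; rw [sub_zero, ce_norm]; norm_num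
    rw [hk, Complex.ofReal_one, mul_one]


lemma coeff_neg_eq (f : ℂ → ℂ) (n : ℕ) :
    circleFourierCoeff f (-(n+1 : ℕ) : ℤ) = ∫ t in (0:ℝ)..1, f (ce t) * (ce t)^(n+1) := by
  apply intervalIntegral.integral_congr
  intro t _
  simp only
  congr 1
  rw [ce_pow]
  congr 1
  push_cast
  ring

lemma coeff_zero_eq (f : ℂ → ℂ) :
    circleFourierCoeff f 0 = ∫ t in (0:ℝ)..1, f (ce t) := by
  apply intervalIntegral.integral_congr
  intro t _
  simp only [Int.cast_zero]
  rw [show -(2 * (Real.pi : ℂ) * Complex.I * (0:ℂ) * (t:ℂ)) = 0 by ring, Complex.exp_zero,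
    mul_one]
  rfl

-- Direction (i) forward: coefficients vanish → Poisson extension works
lemma dir1_fwd {f : ℂ → ℂ} (hf : ContinuousOn f {z : ℂ | ‖z‖ = 1})
    (hneg : ∀ k : ℤ, k < 0 → circleFourierCoeff f k = 0) :
    ∃ F : ℂ → ℂ, ContinuousOn F (closedBall 0 1) ∧
      DifferentiableOn ℂ F (ball 0 1) ∧
      Set.EqOn F f {z : ℂ | ‖z‖ = 1} := by
  have h0 : ∀ n : ℕ, (∫ t in (0:ℝ)..1, f (ce t) * (ce t)^(n+1)) = 0 := by
    intro n
    rw [← coeff_neg_eq]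
    exact hneg _ (by omega)
  obtain ⟨h1, h2, h3, _⟩ := build hf h0
  exact ⟨poissonExt f, h1, h2, h3⟩

-- Direction (i) converse
lemma dir1_rev {f F : ℂ → ℂ} (hFc : ContinuousOn F (closedBall 0 1))
    (hFd : ∀ z ∈ ball (0:ℂ) 1 \ {0}, DifferentiableAt ℂ F z)
    (hFe : Set.EqOn F f {z : ℂ | ‖z‖ = 1}) :
    ∀ k : ℤ, k < 0 → circleFourierCoeff f k = 0 := by
  intro k hk
  obtain ⟨m, hm⟩ : ∃ m : ℕ, (-k).toNat = m + 1 :=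
    Nat.exists_eq_succ_of_ne_zero (by omega)
  have hkm : (k : ℂ) = -((m+1 : ℕ) : ℂ) := by
    have : ((-k).toNat : ℤ) = -k := Int.toNat_of_nonneg (by omega)
    rw [hm] at this
    push_cast
    have : (m : ℤ) + 1 = -k := by exact_mod_cast this
    have h2 : (k : ℤ) = -(m+1) := by omega
    exact_mod_cast congrArg (fun x : ℤ => (x : ℂ)) h2
  have heq : circleFourierCoeff f k = ∫ t in (0:ℝ)..1, F (ce t) * (ce t)^(m+1) := by
    apply intervalIntegral.integral_congr
    intro t _
    simp only
    rw [hFe (ce_mem t)]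
    congr 1
    rw [ce_pow]
    congr 1
    rw [hkm]
    push_cast
    ring
  rw [heq]
  exact integral_boundary_pow_eq_zero hFc hFd m

lemma norm_inv_le_one {z : ℂ} (h : 1 ≤ ‖z‖) : ‖z⁻¹‖ ≤ 1 := by
  rw [norm_inv]
  have h0 : 0 < ‖z‖ := lt_of_lt_of_le one_pos h
  rw [inv_le_one_iff₀]
  right; exact h

lemma norm_inv_lt_one {z : ℂ} (h : 1 < ‖z‖) : ‖z⁻¹‖ < 1 := by
  rw [norm_inv]
  rw [inv_lt_one_iff₀]
  right; exact h

lemma one_le_norm_inv {z : ℂ} (h0 : z ≠ 0) (h : ‖z‖ ≤ 1) : 1 ≤ ‖z⁻¹‖ := by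
  rw [norm_inv]
  rw [one_le_inv_iff₀]
  exact ⟨norm_pos_iff.2 h0, h⟩

lemma one_lt_norm_inv {z : ℂ} (h0 : z ≠ 0) (h : ‖z‖ < 1) : 1 < ‖z⁻¹‖ := by
  rw [norm_inv]
  rw [one_lt_inv_iff₀]
  exact ⟨norm_pos_iff.2 h0, h⟩

lemma norm_eq_one_inv {z : ℂ} (h : ‖z‖ = 1) : ‖z⁻¹‖ = 1 := by
  rw [norm_inv, h, inv_one]

lemma ne_zero_of_norm_one {z : ℂ} (h : ‖z‖ = 1) : z ≠ 0 := by
  intro h0; rw [h0] at h; simp at h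

lemma dir2_fwd {f : ℂ → ℂ} (hf : ContinuousOn f {z : ℂ | ‖z‖ = 1})
    (hpos : ∀ k : ℤ, 0 ≤ k → circleFourierCoeff f k = 0) :
    ∃ F : ℂ → ℂ, ContinuousOn F {z : ℂ | 1 ≤ ‖z‖} ∧
      DifferentiableOn ℂ F {z : ℂ | 1 < ‖z‖} ∧
      Set.EqOn F f {z : ℂ | ‖z‖ = 1} ∧
      Tendsto F (comap (fun z : ℂ => ‖z‖) atTop) (nhds 0) := by
  set g : ℂ → ℂ := fun z => f z⁻¹ with hgdef
  have hg : ContinuousOn g {z : ℂ | ‖z‖ = 1} := by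
    apply hf.comp
    · intro z hz
      exact (continuousAt_inv₀ (ne_zero_of_norm_one hz)).continuousWithinAt
    · intro z hz
      exact norm_eq_one_inv hz
  -- coefficients of g
  have key : ∀ n : ℕ, (∫ t in (0:ℝ)..1, g (ce t) * (ce t)^n)
      = circleFourierCoeff f n := by
    intro n
    have hpt : ∀ t ∈ Set.uIcc (0:ℝ) 1, g (ce t) * (ce t)^n
        = (fun s => f (ce s) * Complex.exp (-(2 * (Real.pi : ℂ) * Complex.I * (n : ℂ) * (s : ℂ)))) (1 - t) := by
      intro t _
      simp only
      rw [ce_one_sub]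
      congr 1
      rw [ce_pow]
      rw [show (-(2 * (Real.pi:ℂ) * Complex.I * (n:ℂ) * ((1 - t : ℝ):ℂ)))
          = 2 * (Real.pi:ℂ) * Complex.I * (n:ℂ) * (t:ℂ) + ((-n : ℤ):ℂ) * (2 * Real.pi * Complex.I) by
        push_cast; ring]
      rw [Complex.exp_add, Complex.exp_int_mul_two_pi_mul_I, mul_one]
    rw [intervalIntegral.integral_congr hpt]
    rw [intervalIntegral.integral_comp_sub_left
      (fun s => f (ce s) * Complex.exp (-(2 * (Real.pi : ℂ) * Complex.I * (n : ℂ) * (s : ℂ)))) 1]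
    rw [show (1:ℝ) - 1 = 0 by norm_num, sub_zero]
    apply intervalIntegral.integral_congr
    intro s _
    simp only [ce]
    norm_cast
  have h0 : ∀ n : ℕ, (∫ t in (0:ℝ)..1, g (ce t) * (ce t)^(n+1)) = 0 := by
    intro n
    exact (key (n+1)).trans (hpos (((n+1 : ℕ)) : ℤ) (by positivity))
  obtain ⟨h1, h2, h3, h4⟩ := build hg h0
  have hG0 : poissonExt g 0 = 0 := by
    rw [h4]
    have hk := key 0
    simp only [pow_zero, mul_one, Nat.cast_zero] at hk
    rw [hk]
    exact hpos 0 le_rfl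
  refine ⟨fun z => poissonExt g z⁻¹, ?_, ?_, ?_, ?_⟩
  · apply h1.comp
    · intro z hz
      have hz0 : z ≠ 0 := by
        intro h; rw [h] at hz; simp at hz
        exact absurd hz (by norm_num)
      exact (continuousAt_inv₀ hz0).continuousWithinAt
    · intro z hz
      rw [Set.mem_setOf_eq] at hz
      rw [mem_closedBall_zero_iff]
      exact norm_inv_le_one hz
  · apply h2.comp
    · intro z hz
      have hz0 : z ≠ 0 := by
        intro h; rw [Set.mem_setOf_eq, h] at hz; simp at hz
        exact absurd hz (by norm_num)
      exact (differentiableAt_inv hz0).differentiableWithinAt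
    · intro z hz
      rw [Set.mem_setOf_eq] at hz
      rw [mem_ball_zero_iff]
      exact norm_inv_lt_one hz
  · intro z hz
    have h5 : poissonExt g z⁻¹ = g z⁻¹ := h3 (norm_eq_one_inv hz)
    show poissonExt g z⁻¹ = f z
    rw [h5]
    show f z⁻¹⁻¹ = f z
    rw [inv_inv]
  · have t0 : Tendsto (fun z : ℂ => z⁻¹) (comap (fun z : ℂ => ‖z‖) atTop)
        (nhds (0:ℂ)) := by
      rw [tendsto_zero_iff_norm_tendsto_zero]
      have : Tendsto (fun z : ℂ => ‖z‖) (comap (fun z : ℂ => ‖z‖) atTop) atTop :=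
        tendsto_comap
      have h5 := (tendsto_inv_atTop_zero).comp this
      simpa [Function.comp_def, norm_inv] using h5
    have tmem : ∀ᶠ z : ℂ in comap (fun z : ℂ => ‖z‖) atTop,
        z⁻¹ ∈ closedBall (0:ℂ) 1 := by
      have : ∀ᶠ z : ℂ in comap (fun z : ℂ => ‖z‖) atTop, 1 ≤ ‖z‖ :=
        eventually_comap.mpr (eventually_atTop.mpr ⟨1, fun b hb z hz => hz ▸ hb⟩)
      filter_upwards [this] with z hz
      rw [mem_closedBall_zero_iff]
      exact norm_inv_le_one hz
    have t1 : Tendsto (fun z : ℂ => z⁻¹) (comap (fun z : ℂ => ‖z‖) atTop)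
        (nhdsWithin (0:ℂ) (closedBall 0 1)) := by
      rw [tendsto_nhdsWithin_iff]
      exact ⟨t0, tmem⟩
    have t2 : Tendsto (poissonExt g) (nhdsWithin (0:ℂ) (closedBall 0 1))
        (nhds 0) := by
      have := h1 0 (mem_closedBall_self zero_le_one)
      rw [ContinuousWithinAt, hG0] at this
      exact this
    exact t2.comp t1

lemma dir2_rev {f F : ℂ → ℂ} (hFc : ContinuousOn F {z : ℂ | 1 ≤ ‖z‖})
    (hFd : DifferentiableOn ℂ F {z : ℂ | 1 < ‖z‖})
    (hFe : Set.EqOn F f {z : ℂ | ‖z‖ = 1})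
    (hFt : Tendsto F (comap (fun z : ℂ => ‖z‖) atTop) (nhds 0)) :
    ∀ k : ℤ, 0 ≤ k → circleFourierCoeff f k = 0 := by
  classical
  set G : ℂ → ℂ := fun w => if w = 0 then 0 else F w⁻¹ with hGdef
  have hGval : ∀ w : ℂ, w ≠ 0 → G w = F w⁻¹ := fun w hw => if_neg hw
  have hG0 : G 0 = 0 := if_pos rfl
  have hopen : IsOpen {z : ℂ | 1 < ‖z‖} := isOpen_lt continuous_const continuous_norm
  -- continuity of G on the closed ball
  have hGc : ContinuousOn G (closedBall 0 1) := by
    intro w hw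
    rcases eq_or_ne w 0 with rfl | hw0
    · -- at the origin
      have hsub : closedBall (0:ℂ) 1 = (closedBall (0:ℂ) 1 \ {0}) ∪ {0} :=
        (Set.diff_union_of_subset (by simp)).symm
      rw [ContinuousWithinAt, hG0, hsub, nhdsWithin_union]
      rw [tendsto_sup]
      constructor
      · -- along the punctured ball
        have tnorm : Tendsto (fun u : ℂ => ‖u‖)
            (nhdsWithin 0 (closedBall (0:ℂ) 1 \ {0})) (nhdsWithin 0 (Set.Ioi 0)) := by
          rw [tendsto_nhdsWithin_iff]
          constructor
          · exact (continuous_norm.tendsto' 0 _ norm_zero).mono_left nhdsWithin_le_nhds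
          · filter_upwards [self_mem_nhdsWithin] with u hu
            exact norm_pos_iff.2 hu.2
        have tinv : Tendsto (fun u : ℂ => ‖u‖⁻¹)
            (nhdsWithin 0 (closedBall (0:ℂ) 1 \ {0})) atTop :=
          tendsto_inv_nhdsGT_zero.comp tnorm
        have t2 : Tendsto (fun u : ℂ => u⁻¹)
            (nhdsWithin 0 (closedBall (0:ℂ) 1 \ {0}))
            (comap (fun z : ℂ => ‖z‖) atTop) := by
          rw [tendsto_comap_iff]
          have : ((fun z : ℂ => ‖z‖) ∘ fun u : ℂ => u⁻¹) = fun u : ℂ => ‖u‖⁻¹ := by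
            funext u; simp [Function.comp, norm_inv]
          rw [this]
          exact tinv
        have t3 := hFt.comp t2
        apply t3.congr'
        filter_upwards [self_mem_nhdsWithin] with u hu
        simp only [Function.comp]
        exact (hGval u hu.2).symm
      · rw [nhdsWithin_singleton]
        rw [tendsto_pure_left]
        intro s hs
        simpa [hG0] using mem_of_mem_nhds hs
    · -- away from the origin
      have hmem : {x : ℂ | x ≠ 0} ∈ nhds w := by
        exact isOpen_ne.mem_nhds hw0
      rw [← continuousWithinAt_inter hmem]
      have hcomp : ContinuousWithinAt (fun u : ℂ => F u⁻¹)
          (closedBall 0 1 ∩ {x : ℂ | x ≠ 0}) w := by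
        apply ContinuousWithinAt.comp (t := {z : ℂ | 1 ≤ ‖z‖})
        · exact hFc _ (one_le_norm_inv hw0 (mem_closedBall_zero_iff.mp hw))
        · exact (continuousAt_inv₀ hw0).continuousWithinAt
        · intro u hu
          exact one_le_norm_inv hu.2 (mem_closedBall_zero_iff.mp hu.1)
      apply hcomp.congr
      · intro u hu
        exact hGval u hu.2
      · exact hGval w hw0
  -- differentiability off the origin
  have hGd : ∀ z ∈ ball (0:ℂ) 1 \ {0}, DifferentiableAt ℂ G z := by
    intro z hz
    have hz0 : z ≠ 0 := hz.2
    have h1 : DifferentiableAt ℂ F z⁻¹ :=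
      hFd.differentiableAt (hopen.mem_nhds
        (one_lt_norm_inv hz0 (mem_ball_zero_iff.mp hz.1)))
    have h2 : DifferentiableAt ℂ (fun u : ℂ => u⁻¹) z := differentiableAt_inv hz0
    have h3 := h1.comp z h2
    apply h3.congr_of_eventuallyEq
    filter_upwards [isOpen_ne.mem_nhds hz0] with u hu
    exact hGval u hu
  -- now compute the coefficient
  intro k hk
  set n := k.toNat with hn
  have hkn : (k : ℂ) = (n : ℂ) := by
    have : (n : ℤ) = k := Int.toNat_of_nonneg hk
    exact_mod_cast congrArg (fun x : ℤ => (x : ℂ)) this.symm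
  have hpt : ∀ t ∈ Set.uIcc (0:ℝ) 1,
      f (Complex.exp (2 * (Real.pi : ℂ) * Complex.I * (t : ℂ))) *
        Complex.exp (-(2 * (Real.pi : ℂ) * Complex.I * (k : ℂ) * (t : ℂ)))
      = (fun s => G (ce s) * (ce s)^n) (1 - t) := by
    intro t _
    simp only
    rw [ce_one_sub]
    have e1 : G ((ce t)⁻¹) = f (ce t) := by
      rw [hGval _ (inv_ne_zero (ce_ne_zero t)), inv_inv]
      exact hFe (ce_mem t)
    rw [e1]
    congr 1
    rw [ce_inv, ce_pow, hkn]
    congr 1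
    push_cast
    ring
  have hint : circleFourierCoeff f k = ∫ s in (0:ℝ)..1, G (ce s) * (ce s)^n := by
    rw [circleFourierCoeff]
    rw [intervalIntegral.integral_congr hpt]
    rw [intervalIntegral.integral_comp_sub_left (fun s => G (ce s) * (ce s)^n) 1]
    rw [show (1:ℝ) - 1 = 0 by norm_num, sub_zero]
  rw [hint]
  rcases Nat.eq_zero_or_pos n with hn0 | hn1
  · rw [hn0]
    simp only [pow_zero, mul_one]
    rw [integral_boundary_eq_center hGc hGd, hG0]
  · obtain ⟨m, hm⟩ := Nat.exists_eq_succ_of_ne_zero (Nat.pos_iff_ne_zero.mp hn1)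
    rw [hm]
    exact integral_boundary_pow_eq_zero hGc hGd m


/-- For a continuous function `f` on the unit circle:
(i) all negatively-indexed Fourier coefficients vanish iff `f` extends continuously to the
closed unit disk, holomorphically on the open disk; and
(ii) all Fourier coefficients with index `≥ 0` vanish iff `f` extends continuously to
`{|z| ≥ 1}`, holomorphically on `{|z| > 1}`, with limit `0` at `∞`. -/
theorem stmt_3 (f : ℂ → ℂ) (hf : ContinuousOn f {z : ℂ | ‖z‖ = 1}) :
    ((∀ k : ℤ, k < 0 → circleFourierCoeff f k = 0) ↔
      ∃ F : ℂ → ℂ, ContinuousOn F (closedBall 0 1) ∧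
        DifferentiableOn ℂ F (ball 0 1) ∧
        Set.EqOn F f {z : ℂ | ‖z‖ = 1}) ∧
    ((∀ k : ℤ, 0 ≤ k → circleFourierCoeff f k = 0) ↔
      ∃ F : ℂ → ℂ, ContinuousOn F {z : ℂ | 1 ≤ ‖z‖} ∧
        DifferentiableOn ℂ F {z : ℂ | 1 < ‖z‖} ∧
        Set.EqOn F f {z : ℂ | ‖z‖ = 1} ∧
        Tendsto F (comap (fun z : ℂ => ‖z‖) atTop) (nhds 0)) := by
  constructor
  · constructor
    · exact fun h => dir1_fwd hf h
    · rintro ⟨F, hFc, hFd, hFe⟩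
      exact dir1_rev hFc (fun z hz => hFd.differentiableAt (isOpen_ball.mem_nhds hz.1)) hFe
  · constructor
    · exact fun h => dir2_fwd hf h
    · rintro ⟨F, hFc, hFd, hFe, hFt⟩
      exact dir2_rev hFc hFd hFe hFt
end

section
/- Let (E, ‖·‖) be a complex Banach space, x ∈ E, r > 0, and let f : B_r(x) → E be a complex-analytic map on the open ball B_r(x) such that the Fréchet derivative f′(x) equals the identity id_E and the map y ↦ f(y) − y is Lipschitz on B_r(x) with Lipschitz constant ≤ 1/2. Then f(B_r(x)) is open in E, f : B_r(x) → f(B_r(x)) is a bijection whose inverse is complex analytic, and B_{r/2}(f(x)) ⊆ f(B_r(x)) ⊆ B_{3r/2}(f(x)). -/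
open Metric

/-- Quantitative inverse function theorem on a ball of a complex Banach
space: if `f` is complex analytic on `B_r(x)`, `f′(x) = id`, and `y ↦ f(y) − y` is
Lipschitz with constant `≤ 1/2` on `B_r(x)`, then `f(B_r(x))` is open, `f` is a bijection
from `B_r(x)` onto its image with complex-analytic inverse, and
`B_{r/2}(f(x)) ⊆ f(B_r(x)) ⊆ B_{3r/2}(f(x))`. -/
theorem stmt_8 {E : Type*} [NormedAddCommGroup E] [NormedSpace ℂ E] [CompleteSpace E]
    (x : E) (r : ℝ) (hr : 0 < r) (f : E → E)
    (hf : AnalyticOnNhd ℂ f (ball x r))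
    (hder : fderiv ℂ f x = ContinuousLinearMap.id ℂ E)
    (hlip : LipschitzOnWith (1/2 : NNReal) (fun y => f y - y) (ball x r)) :
    IsOpen (f '' ball x r) ∧
    Set.InjOn f (ball x r) ∧
    (∃ g : E → E, AnalyticOnNhd ℂ g (f '' ball x r) ∧
      (∀ y ∈ ball x r, g (f y) = y) ∧
      ∀ w ∈ f '' ball x r, g w ∈ ball x r ∧ f (g w) = w) ∧
    ball (f x) (r / 2) ⊆ f '' ball x r ∧
    f '' ball x r ⊆ ball (f x) (3 * r / 2) := by
  rcases subsingleton_or_nontrivial E with hE | hE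
  · -- trivial case: `E` is a subsingleton
    have hxb : x ∈ ball x r := mem_ball_self hr
    have himg : f '' ball x r = Set.univ :=
      Set.Nonempty.eq_univ ⟨f x, x, hxb, rfl⟩
    refine ⟨himg ▸ isOpen_univ, fun a _ b _ _ => Subsingleton.elim a b,
      ⟨fun _ => x, ?_, fun y _ => Subsingleton.elim _ _,
        fun w _ => ⟨hxb, Subsingleton.elim _ _⟩⟩, ?_, ?_⟩
    · exact fun w _ => analyticAt_const
    · rw [himg]; exact Set.subset_univ _
    · rintro w ⟨y, hy, rfl⟩
      rw [mem_ball, Subsingleton.elim y x]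
      simpa using by positivity
  -- main case
  have hA : ApproximatesLinearOn f
      ((ContinuousLinearEquiv.refl ℂ E : E ≃L[ℂ] E) : E →L[ℂ] E) (ball x r)
      (1/2 : NNReal) := by
    intro a ha b hb
    have h := hlip.dist_le_mul a ha b hb
    simp only [dist_eq_norm] at h
    calc ‖f a - f b - (ContinuousLinearEquiv.refl ℂ E : E →L[ℂ] E) (a - b)‖
        = ‖(f a - a) - (f b - b)‖ := by
          show ‖f a - f b - (a - b)‖ = _
          congr 1; abel
      _ ≤ (1/2 : NNReal) * ‖a - b‖ := h
  have hc : Subsingleton E ∨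
      (1/2 : NNReal) < ‖(((ContinuousLinearEquiv.refl ℂ E).symm :
        E ≃L[ℂ] E) : E →L[ℂ] E)‖₊⁻¹ := by
    right
    simp only [ContinuousLinearEquiv.refl_symm, ContinuousLinearEquiv.coe_refl]
    rw [ContinuousLinearMap.nnnorm_id, inv_one]
    rw [← NNReal.coe_lt_coe]
    norm_num
  set Φ := hA.toOpenPartialHomeomorph f (ball x r) hc isOpen_ball with hΦ
  have hΦcoe : (Φ : E → E) = f := rfl
  have hΦsource : Φ.source = ball x r := rfl
  have hΦtarget : Φ.target = f '' ball x r := rfl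
  refine ⟨?_, hA.injOn hc, ⟨Φ.symm, ?_, ?_, ?_⟩, ?_, ?_⟩
  · -- openness of the image
    have := Φ.open_target
    rwa [hΦtarget] at this
  · -- the inverse is analytic
    rintro w ⟨y, hy, rfl⟩
    obtain ⟨p, hp⟩ := hf y hy
    -- the derivative at y is invertible
    have hd : DifferentiableAt ℂ f y := (hf y hy).differentiableAt
    have hb : ‖fderiv ℂ (fun z => f z - z) y‖ ≤ ((1/2 : NNReal) : ℝ) :=
      norm_fderiv_le_of_lipschitzOn ℂ (isOpen_ball.mem_nhds hy) hlip
    have hsub : fderiv ℂ (fun z => f z - z) y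
        = fderiv ℂ f y - ContinuousLinearMap.id ℂ E := by
      rw [fderiv_fun_sub hd differentiableAt_fun_id]
      simp [fderiv_id']
    rw [hsub] at hb
    have hlt : ‖(1 : E →L[ℂ] E) - fderiv ℂ f y‖ < 1 := by
      rw [ContinuousLinearMap.one_def, norm_sub_rev]
      push_cast at hb
      linarith
    set u : (E →L[ℂ] E)ˣ := Units.oneSub _ hlt with hu
    set i : E ≃L[ℂ] E := ContinuousLinearEquiv.ofUnit u with hi
    have hicoe : (i : E →L[ℂ] E) = fderiv ℂ f y := by
      ext v
      simp [hi, hu, ContinuousLinearEquiv.ofUnit, Units.oneSub, sub_sub_cancel]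
    have h2 : (i : E →L[ℂ] E) = continuousMultilinearCurryFin1 ℂ E E (p 1) := by
      rw [hicoe]; exact hp.fderiv_eq
    have h1 : p 1 = (continuousMultilinearCurryFin1 ℂ E E).symm (i : E →L[ℂ] E) := by
      rw [h2]
      exact ((continuousMultilinearCurryFin1 ℂ E E).symm_apply_apply _).symm
    have hsymm := Φ.hasFPowerSeriesAt_symm (a := y) hy hp h1
    exact ⟨_, hsymm⟩
  · -- left inverse on the ball
    exact fun y hy => Φ.left_inv hy
  · -- right inverse on the image
    exact fun w hw => ⟨Φ.map_target hw, Φ.right_inv hw⟩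
  · -- lower inclusion
    intro w hw
    have hd : dist w (f x) < r / 2 := mem_ball.1 hw
    have hd0 : 0 ≤ dist w (f x) := dist_nonneg
    set ε : ℝ := (2 * dist w (f x) + r) / 2 with hε
    have hε0 : 0 ≤ ε := by positivity
    have hεr : ε < r := by rw [hε]; linarith
    have hsub : closedBall x ε ⊆ ball x r := closedBall_subset_ball hεr
    have hsurj := hA.surjOn_closedBall_of_nonlinearRightInverse
      (ContinuousLinearEquiv.refl ℂ E).toNonlinearRightInverse hε0 hsub
    have hN : (((ContinuousLinearEquiv.refl ℂ E).toNonlinearRightInverse.nnnorm : ℝ)) = 1 := by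
      simp only [ContinuousLinearEquiv.toNonlinearRightInverse,
        ContinuousLinearEquiv.refl_symm, ContinuousLinearEquiv.coe_refl]
      rw [ContinuousLinearMap.nnnorm_id, NNReal.coe_one]
    have hw' : dist w (f x) ≤
        ((((ContinuousLinearEquiv.refl ℂ E).toNonlinearRightInverse.nnnorm : ℝ))⁻¹
          - ((1/2 : NNReal) : ℝ)) * ε := by
      rw [hN]
      push_cast
      rw [hε]
      nlinarith
    obtain ⟨z, hz, hzw⟩ := hsurj (mem_closedBall.2 hw')
    exact ⟨z, hsub hz, hzw⟩
  · -- upper inclusion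
    rintro w ⟨y, hy, rfl⟩
    have h1 := hlip.dist_le_mul y hy x (mem_ball_self hr)
    have h2 : dist y x < r := mem_ball.1 hy
    rw [mem_ball]
    have h3 : dist (f y) (f x) ≤ dist (f y - y) (f x - x) + dist y x := by
      simp only [dist_eq_norm]
      calc ‖f y - f x‖ = ‖((f y - y) - (f x - x)) + (y - x)‖ := by congr 1; abel
        _ ≤ ‖(f y - y) - (f x - x)‖ + ‖y - x‖ := norm_add_le _ _
    have h1' : dist (f y - y) (f x - x) ≤ ((1/2 : NNReal) : ℝ) * dist y x := h1
    push_cast at h1'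
    linarith
end

section
/- Let G be a complex Banach–Lie group such that holomorphic functions separate the points of G. Let g₊, h₊ : ℂ → G be holomorphic and let g₋, h₋ : ℂ× → G be holomorphic with g₋(z) → e and h₋(z) → e as |z| → ∞ (e the neutral element). If g₊(z)·g₋(z) = h₊(z)·h₋(z) for all z ∈ ℂ×, then g₊ = h₊ and g₋ = h₋. -/
open Manifold Metric Filter

/-- Uniqueness of entire Birkhoff decompositions on `ℂ×` with values in a
complex Banach–Lie group `G` on which holomorphic functions separate points: if
`g₊ g₋ = h₊ h₋` on `ℂ×` where `g₊, h₊ : ℂ → G` are holomorphic and `g₋, h₋ : ℂ× → G` are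
holomorphic with limit `e` at infinity, then `g₊ = h₊` and `g₋ = h₋`. -/
theorem stmt_13
    {E : Type*} [NormedAddCommGroup E] [NormedSpace ℂ E]
    {G : Type*} [TopologicalSpace G] [T2Space G] [ChartedSpace E G] [Group G]
    [LieGroup 𝓘(ℂ, E) (⊤ : ℕ∞) G]
    (hsep : ∀ x y : G, x ≠ y → ∃ φ : G → ℂ,
      MDifferentiable 𝓘(ℂ, E) 𝓘(ℂ, ℂ) φ ∧ φ x ≠ φ y)
    (gp hp gm hm : ℂ → G)
    (hgp : MDifferentiable 𝓘(ℂ, ℂ) 𝓘(ℂ, E) gp)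
    (hhp : MDifferentiable 𝓘(ℂ, ℂ) 𝓘(ℂ, E) hp)
    (hgm : MDifferentiableOn 𝓘(ℂ, ℂ) 𝓘(ℂ, E) gm {z : ℂ | z ≠ 0})
    (hhm : MDifferentiableOn 𝓘(ℂ, ℂ) 𝓘(ℂ, E) hm {z : ℂ | z ≠ 0})
    (hgml : Tendsto gm (comap (fun z : ℂ => ‖z‖) atTop) (nhds (1 : G)))
    (hhml : Tendsto hm (comap (fun z : ℂ => ‖z‖) atTop) (nhds (1 : G)))
    (heq : ∀ z : ℂ, z ≠ 0 → gp z * gm z = hp z * hm z) :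
    gp = hp ∧ Set.EqOn gm hm {z : ℂ | z ≠ 0} := by
  set F := comap (fun z : ℂ => ‖z‖) atTop with hF
  have hFc : F = cocompact ℂ := by
    rw [hF, ← Metric.cobounded_eq_cocompact]
    exact comap_norm_atTop
  -- the comparison function
  set k : ℂ → G := fun z => (hp z)⁻¹ * gp z with hk_def
  have hmul : MDifferentiable (𝓘(ℂ, E).prod 𝓘(ℂ, E)) 𝓘(ℂ, E)
      (fun p : G × G => p.1 * p.2) := (contMDiff_mul 𝓘(ℂ, E) ((⊤ : ℕ∞) : WithTop ℕ∞)).mdifferentiable (by simp)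
  have hinv : MDifferentiable 𝓘(ℂ, E) 𝓘(ℂ, E) (fun x : G => x⁻¹) :=
    (contMDiff_inv 𝓘(ℂ, E) ((⊤ : ℕ∞) : WithTop ℕ∞)).mdifferentiable (by simp)
  have hk : MDifferentiable 𝓘(ℂ, ℂ) 𝓘(ℂ, E) k :=
    hmul.comp (((hinv.comp hhp)).prodMk hgp)
  -- eventually nonzero along F
  have hne : ∀ᶠ z : ℂ in F, z ≠ 0 := by
    have : ∀ᶠ z : ℂ in F, (1 : ℝ) ≤ ‖z‖ := preimage_mem_comap (eventually_ge_atTop 1)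
    filter_upwards [this] with z hz h0
    simp [h0] at hz
    linarith
  -- k equals hm * gm⁻¹ on ℂ×
  have hkeq : ∀ z : ℂ, z ≠ 0 → k z = hm z * (gm z)⁻¹ := by
    intro z hz
    have h := heq z hz
    simp only [hk_def]
    rw [inv_mul_eq_iff_eq_mul, ← mul_assoc, ← h, mul_assoc, mul_inv_cancel, mul_one]
  -- k tends to 1 along F
  have hkT : Tendsto k F (nhds (1 : G)) := by
    have h1 : Tendsto (fun z => (hm z, (gm z)⁻¹)) F (nhds ((1 : G), ((1 : G))⁻¹)) :=
      hhml.prodMk_nhds ((hinv.continuous.tendsto 1).comp hgml)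
    have h2 : Tendsto (fun z => hm z * (gm z)⁻¹) F (nhds ((1 : G) * (1 : G)⁻¹)) :=
      ((hmul.continuous.tendsto _).comp h1)
    simp only [inv_one, mul_one] at h2
    exact h2.congr' (by filter_upwards [hne] with z hz using (hkeq z hz).symm)
  have key : ∀ z : ℂ, k z = 1 := by
    intro z₀
    by_contra hne1
    obtain ⟨φ, hφ, hφne⟩ := hsep (k z₀) 1 hne1
    have hf : Differentiable ℂ (φ ∘ k) :=
      mdifferentiable_iff_differentiable.mp (hφ.comp hk)
    have hfT : Tendsto (φ ∘ k) (cocompact ℂ) (nhds (φ 1)) := by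
      rw [← hFc]
      exact (hφ.continuous.tendsto 1).comp hkT
    exact hφne (hf.apply_eq_of_tendsto_cocompact z₀ hfT)
  have hgphp : gp = hp := by
    funext z
    exact (inv_mul_eq_one.mp (key z)).symm
  refine ⟨hgphp, fun z hz => ?_⟩
  have h := heq z hz
  rw [hgphp] at h
  exact mul_left_cancel h
end

section
/- Let n ∈ ℕ and κ₁ ≥ κ₂ ≥ ⋯ ≥ κ_n be integers. Let C : ℂ → M_n(ℂ) be a map whose entries c_{kj} are polynomial functions satisfying, for all j, k ∈ {1,…,n}: c_{kj} = 0 if κ_k < κ_j; c_{kj} is constant if κ_k = κ_j; and c_{kj} is a polynomial of degree ≤ κ_k − κ_j if κ_k > κ_j. Assume C(z) is invertible for every z ∈ ℂ. Then the entries of z ↦ C(z)⁻¹ are again polynomial functions satisfying the same three conditions (with respect to the same integers κ₁,…,κ_n). -/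
open Polynomial Matrix

private lemma det_degree_le_aux {m : ℕ} (M : Matrix (Fin m) (Fin m) (Polynomial ℂ))
    (r : Fin m → ℕ) (h : ∀ i j, (M i j).degree ≤ (r i : WithBot ℕ)) :
    M.det.degree ≤ ((∑ i, r i : ℕ) : WithBot ℕ) := by
  rw [Matrix.det_apply]
  refine (Polynomial.degree_sum_le _ _).trans ?_
  rw [Finset.sup_le_iff]
  intro σ _
  have h1 : ((Equiv.Perm.sign σ) • ∏ i, M (σ i) i).degree ≤ (∏ i, M (σ i) i).degree := by
    rcases Int.units_eq_one_or (Equiv.Perm.sign σ) with hs | hs <;>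
      simp [hs, Units.smul_def, Polynomial.degree_neg]
  refine h1.trans ((Polynomial.degree_prod_le _ _).trans ?_)
  calc ∑ i, (M (σ i) i).degree ≤ ∑ i, ((r (σ i) : WithBot ℕ)) :=
        Finset.sum_le_sum fun i _ => h (σ i) i
    _ = ((∑ i, r (σ i) : ℕ) : WithBot ℕ) := by rw [Nat.cast_sum]
    _ = ((∑ i, r i : ℕ) : WithBot ℕ) := by rw [Equiv.sum_comp σ r]

theorem stmt_17 (n : ℕ) (κ : Fin n → ℤ) (hκ : Antitone κ)
    (p : Fin n → Fin n → Polynomial ℂ)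
    (h0 : ∀ k j, κ k < κ j → p k j = 0)
    (hconst : ∀ k j, κ k = κ j → (p k j).degree ≤ 0)
    (hdeg : ∀ k j, κ j < κ k → (p k j).degree ≤ ((κ k - κ j).toNat : ℕ))
    (hinv : ∀ z : ℂ, IsUnit (Matrix.of fun k j => (p k j).eval z)) :
    ∃ q : Fin n → Fin n → Polynomial ℂ,
      (∀ z : ℂ, (Matrix.of fun k j => (q k j).eval z) =
        (Matrix.of fun k j => (p k j).eval z)⁻¹) ∧
      (∀ k j, κ k < κ j → q k j = 0) ∧
      (∀ k j, κ k = κ j → (q k j).degree ≤ 0) ∧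
      (∀ k j, κ j < κ k → (q k j).degree ≤ ((κ k - κ j).toNat : ℕ)) := by
  classical
  obtain ⟨B, hB⟩ : ∃ B : ℤ, ∀ k, B ≤ κ k := by
    obtain ⟨B, hB⟩ := Finite.exists_le (fun k => -κ k)
    exact ⟨-B, fun k => by have := hB k; omega⟩
  set e : Fin n → ℕ := fun k => (κ k - B).toNat with he
  have hecast : ∀ k, (e k : ℤ) = κ k - B := fun k =>
    Int.toNat_of_nonneg (by have := hB k; omega)
  set Cp : Matrix (Fin n) (Fin n) (Polynomial ℂ) := Matrix.of p with hCp
  have hCpa : ∀ k j, Cp k j = p k j := fun k j => rfl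
  -- row degree bound after column scaling
  have hrow : ∀ k j, ((p k j) * X ^ (e j)).degree ≤ (e k : WithBot ℕ) := by
    intro k j
    rcases lt_trichotomy (κ k) (κ j) with h | h | h
    · simp [h0 k j h]
    · have hej : e j = e k := by have := hecast j; have := hecast k; omega
      calc (p k j * X ^ e j).degree ≤ (p k j).degree + (X ^ e j : Polynomial ℂ).degree :=
            Polynomial.degree_mul_le _ _
        _ ≤ 0 + (e j : WithBot ℕ) := add_le_add (hconst k j h) (Polynomial.degree_X_pow _).le
        _ = (e k : WithBot ℕ) := by rw [hej, zero_add]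
    · have hsum : ((κ k - κ j).toNat) + e j = e k := by
        have := hecast j; have := hecast k; omega
      calc (p k j * X ^ e j).degree ≤ (p k j).degree + (X ^ e j : Polynomial ℂ).degree :=
            Polynomial.degree_mul_le _ _
        _ ≤ (((κ k - κ j).toNat : ℕ) : WithBot ℕ) + (e j : WithBot ℕ) :=
            add_le_add (hdeg k j h) (Polynomial.degree_X_pow _).le
        _ = (e k : WithBot ℕ) := by rw [← Nat.cast_add, hsum]
  -- evaluation commutes with det
  have hmapeq : ∀ z : ℂ, (Matrix.of fun k j => (p k j).eval z) = Cp.map (Polynomial.eval z) :=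
    fun z => rfl
  have hdetmap : ∀ z : ℂ, (Cp.map (Polynomial.eval z)).det = Polynomial.eval z Cp.det := by
    intro z
    have := (Polynomial.evalRingHom z).map_det Cp
    rw [RingHom.mapMatrix_apply] at this
    simp only [Polynomial.coe_evalRingHom] at this
    exact this.symm
  have hdet0 : Cp.det ≠ 0 := by
    intro h
    have h1 := (Matrix.isUnit_iff_isUnit_det _).mp (hinv 0)
    rw [hmapeq 0, hdetmap 0, h] at h1
    simp at h1
  -- determinant has degree ≤ 0
  have hfact : ∀ (A : Matrix (Fin n) (Fin n) (Polynomial ℂ)),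
      (Matrix.of fun i c => A i c * X ^ (e c)) =
        A * Matrix.diagonal (fun j => (X : Polynomial ℂ) ^ (e j)) := by
    intro A; ext i c; simp [Matrix.mul_diagonal]
  have hdetdeg : Cp.det.degree ≤ 0 := by
    have hb := det_degree_le_aux (Matrix.of fun k j => p k j * X ^ (e j)) e
      (fun i j => by simpa using hrow i j)
    have : (Matrix.of fun k j => p k j * X ^ (e j)) =
        Cp * Matrix.diagonal (fun j => (X : Polynomial ℂ) ^ (e j)) := hfact Cp
    rw [this, Matrix.det_mul, Matrix.det_diagonal, Finset.prod_pow_eq_pow_sum,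
      Polynomial.degree_mul, Polynomial.degree_X_pow,
      Polynomial.degree_eq_natDegree hdet0] at hb
    have hb' : Cp.det.natDegree + (∑ i, e i) ≤ ∑ i, e i := by exact_mod_cast hb
    have hz : Cp.det.natDegree = 0 := by omega
    rw [Polynomial.degree_eq_natDegree hdet0, hz, Nat.cast_zero]
  have hc : Cp.det = Polynomial.C (Cp.det.coeff 0) := Polynomial.degree_le_zero_iff.mp hdetdeg
  set c : ℂ := Cp.det.coeff 0 with hcdef
  have hcz : ∀ z : ℂ, (Matrix.of fun k j => (p k j).eval z).det = c := by
    intro z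
    rw [hmapeq z, hdetmap z, hc, Polynomial.eval_C]
  have hc0 : c ≠ 0 := by
    have h1 := (Matrix.isUnit_iff_isUnit_det _).mp (hinv 0)
    rw [hcz 0] at h1
    exact h1.ne_zero
  -- adjugate entries degree bound
  have hadj : ∀ k j, Cp.adjugate k j ≠ 0 →
      (Cp.adjugate k j).natDegree + e j ≤ e k := by
    intro k j hne
    have hAd : Cp.adjugate k j = (Cp.updateRow j (Pi.single k 1)).det :=
      Matrix.adjugate_apply _ _ _
    set A : Matrix (Fin n) (Fin n) (Polynomial ℂ) := Cp.updateRow j (Pi.single k 1) with hA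
    set r : Fin n → ℕ := fun i => if i = j then e k else e i with hr
    have hb := det_degree_le_aux (Matrix.of fun i c => A i c * X ^ (e c)) r ?_
    · rw [hfact A, Matrix.det_mul, Matrix.det_diagonal, Finset.prod_pow_eq_pow_sum,
        Polynomial.degree_mul, Polynomial.degree_X_pow, ← hAd,
        Polynomial.degree_eq_natDegree hne] at hb
      have hb' : (Cp.adjugate k j).natDegree + (∑ i, e i) ≤ ∑ i, r i := by exact_mod_cast hb
      have h1 : ∑ i, r i = e k + ∑ i ∈ Finset.univ.erase j, e i := by
        rw [← Finset.add_sum_erase _ r (Finset.mem_univ j)]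
        simp only [hr, if_pos rfl]
        congr 1
        exact Finset.sum_congr rfl fun i hi => by
          simp [Finset.mem_erase.mp hi |>.1]
      have h2 : ∑ i, e i = e j + ∑ i ∈ Finset.univ.erase j, e i :=
        (Finset.add_sum_erase _ e (Finset.mem_univ j)).symm
      omega
    · intro i c
      by_cases hij : i = j
      · subst hij
        simp only [Matrix.of_apply, hA, Matrix.updateRow_self]
        by_cases hck : c = k
        · subst hck
          simp only [Pi.single_eq_same, one_mul, hr, if_pos rfl]
          exact (Polynomial.degree_X_pow _).le
        · simp [Pi.single_eq_of_ne hck]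
      · simp only [Matrix.of_apply, hA, Matrix.updateRow_ne hij, hr, if_neg hij, hCpa]
        exact hrow i c
  -- the inverse polynomials
  refine ⟨fun k j => Polynomial.C c⁻¹ * Cp.adjugate k j, ?_, ?_, ?_, ?_⟩
  · intro z
    rw [Matrix.inv_def, hcz z, Ring.inverse_eq_inv]
    have hadjm : (Matrix.of fun k j => (p k j).eval z).adjugate =
        (Cp.adjugate).map (Polynomial.eval z) := by
      rw [hmapeq z]
      have := (Polynomial.evalRingHom z).map_adjugate Cp
      rw [RingHom.mapMatrix_apply, RingHom.mapMatrix_apply] at this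
      simp only [Polynomial.coe_evalRingHom] at this
      exact this.symm
    rw [hadjm]
    ext i j
    simp [Matrix.smul_apply, Matrix.map_apply]
  · intro k j hkj
    have hz : Cp.adjugate k j = 0 := by
      by_contra hne
      have h1 := hadj k j hne
      have h2 : e k < e j := by have := hecast j; have := hecast k; omega
      omega
    simp [hz]
  · intro k j hkj
    by_cases hne : Cp.adjugate k j = 0
    · simp [hne]
    · have h1 := hadj k j hne
      have h2 : e k = e j := by have := hecast j; have := hecast k; omega
      have h3 : (Cp.adjugate k j).natDegree = 0 := by omega
      rw [Polynomial.degree_mul, Polynomial.degree_C (inv_ne_zero hc0), zero_add,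
        Polynomial.degree_eq_natDegree hne, h3, Nat.cast_zero]
  · intro k j hkj
    by_cases hne : Cp.adjugate k j = 0
    · simp [hne]
    · have h1 := hadj k j hne
      have h2 : (Cp.adjugate k j).natDegree ≤ (κ k - κ j).toNat := by
        have := hecast j; have := hecast k; omega
      rw [Polynomial.degree_mul, Polynomial.degree_C (inv_ne_zero hc0), zero_add,
        Polynomial.degree_eq_natDegree hne]
      exact_mod_cast h2
end
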